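/- arXiv:2203.03406 — 5 statements merged into one kernel-verified Lean document; each statement's English description precedes it below -/
import Mathlib

section
/- Let n and k be positive integers, and let u and v be distinct vertices of the Kneser graph K(2n+k,n) with s = |u ∩ v|. If (⌈(n-1)/(2k)⌉ - 1)·k + 1 ≤ s ≤ (⌈(n-1)/(2k)⌉ - 1)·k + 1 + H(n,k), then dist(u,v) = diam(K(2n+k,n)). -/
/-- The Kneser graph `K(m, n)`: vertices are the `n`-element subsets of an `m`-element
ground set, with edges between disjoint sets. -/
def KneserGraph (m n : ℕ) : SimpleGraph {s : Finset (Fin m) // s.card = n} where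
  Adj u v := Disjoint u.1 v.1 ∧ u ≠ v
  symm := ⟨fun u v ⟨h, hne⟩ => ⟨h.symm, hne.symm⟩⟩
  loopless := ⟨fun u ⟨_, h⟩ => h rfl⟩

/-- The geodetic interval `I[u,v]`: all vertices lying on some shortest `u,v`-path. -/
def geodInterval {V : Type*} (G : SimpleGraph V) (u v : V) : Set V :=
  {w | G.dist u w + G.dist w v = G.dist u v}

/-- `I[W] = ⋃_{u,v ∈ W} I[u,v]`. -/
def geodIntervalSet {V : Type*} (G : SimpleGraph V) (W : Set V) : Set V :=
  ⋃ (u ∈ W) (v ∈ W), geodInterval G u v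

/-- `W` is a geodetic set if `I[W] = V(G)`. -/
def IsGeodeticSet {V : Type*} (G : SimpleGraph V) (W : Set V) : Prop :=
  geodIntervalSet G W = Set.univ

/-- `W` is geodetically convex if `I[W] = W`. -/
def IsGConvex {V : Type*} (G : SimpleGraph V) (W : Set V) : Prop :=
  geodIntervalSet G W = W

/-- The geodetic hull `H[W]`: the smallest g-convex set containing `W`. -/
def geodHull {V : Type*} (G : SimpleGraph V) (W : Set V) : Set V :=
  ⋂₀ {C | IsGConvex G C ∧ W ⊆ C}

/-- `W` is a geodetic hull set if `H[W] = V(G)`. -/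
def IsGeodHullSet {V : Type*} (G : SimpleGraph V) (W : Set V) : Prop :=
  geodHull G W = Set.univ

/-- The geodetic number: minimum cardinality of a geodetic set. -/
noncomputable def geodeticNumber {V : Type*} (G : SimpleGraph V) : ℕ :=
  sInf {m | ∃ W : Set V, IsGeodeticSet G W ∧ W.ncard = m}

/-- The geodetic hull number: minimum cardinality of a geodetic hull set. -/
noncomputable def geodHullNumber {V : Type*} (G : SimpleGraph V) : ℕ :=
  sInf {m | ∃ W : Set V, IsGeodHullSet G W ∧ W.ncard = m}

/-- The function `H(n,k)` from the paper. -/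
def Hfun (n k : ℕ) : ℕ := if n % k ≤ 1 then n % k + k - 2 else n % k - 2

/-- `p = (⌈(n-1)/(2k)⌉ - 1)·k + 1`, computed in `ℤ`. -/
def pInt (n k : ℕ) : ℤ := (⌈((n : ℚ) - 1) / (2 * k)⌉ - 1) * k + 1


namespace KneserAux

variable {n k : ℕ}

abbrev KV (n k : ℕ) := {s : Finset (Fin (2*n+k)) // s.card = n}

lemma card_compl (x : KV n k) : (x.1ᶜ).card = n + k := by
  rw [Finset.card_compl, x.2]
  simp only [Fintype.card_fin]
  omega

lemma adj_of_disjoint (hn : 0 < n) (x y : KV n k) (h : Disjoint x.1 y.1) :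
    (KneserGraph (2*n+k) n).Adj x y := by
  refine (⟨h, ?_⟩ : Disjoint x.1 y.1 ∧ x ≠ y)
  rintro rfl
  rw [disjoint_self] at h
  have := x.2
  rw [h] at this
  simp at this
  omega

lemma inter_card_lt (x y : KV n k) (hxy : x ≠ y) : (x.1 ∩ y.1).card < n := by
  have h1 : (x.1 ∩ y.1).card ≤ n := by
    calc (x.1 ∩ y.1).card ≤ x.1.card := Finset.card_le_card (Finset.inter_subset_left)
    _ = n := x.2
  rcases lt_or_eq_of_le h1 with h | h
  · exact h
  · exfalso
    have hsub : x.1 ⊆ y.1 := by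
      have : x.1 ∩ y.1 = x.1 := Finset.eq_of_subset_of_card_le Finset.inter_subset_left
        (by rw [h, x.2])
      rw [← this]; exact Finset.inter_subset_right
    have : x.1 = y.1 := Finset.eq_of_subset_of_card_le hsub (by rw [x.2, y.2])
    exact hxy (Subtype.ext this)

lemma exists_walk (hn : 0 < n) (hk : 0 < k) : ∀ j : ℕ,
    (∀ u v : KV n k, u ≠ v → n ≤ (u.1 ∩ v.1).card + j * k →
      ∃ p : (KneserGraph (2*n+k) n).Walk u v, p.length ≤ 2*j) ∧
    (∀ u v : KV n k, (u.1 ∩ v.1).card ≤ j * k →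
      ∃ p : (KneserGraph (2*n+k) n).Walk u v, p.length ≤ 2*j+1) := by
  intro j
  induction j with
  | zero =>
    constructor
    · intro u v huv hle
      exfalso
      have := inter_card_lt u v huv
      omega
    · intro u v hle
      have hne : u ≠ v := by
        rintro rfl
        have : (u.1 ∩ u.1).card = n := by rw [Finset.inter_self, u.2]
        omega
      have hdisj : Disjoint u.1 v.1 := by
        rw [Finset.disjoint_iff_inter_eq_empty]
        have : (u.1 ∩ v.1).card = 0 := by omega
        exact Finset.card_eq_zero.mp this
      refine ⟨(adj_of_disjoint hn u v hdisj).toWalk, ?_⟩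
      simp only [SimpleGraph.Adj.toWalk, SimpleGraph.Walk.length_cons,
        SimpleGraph.Walk.length_nil]
      omega
  | succ j IH =>
    have claim1 : ∀ u v : KV n k, u ≠ v → n ≤ (u.1 ∩ v.1).card + (j+1) * k →
        ∃ p : (KneserGraph (2*n+k) n).Walk u v, p.length ≤ 2*(j+1) := by
      intro u v huv hle
      set s := (u.1 ∩ v.1).card with hs
      -- B := u.1ᶜ \ v.1 has card k + s
      have hBcard : (u.1ᶜ \ v.1).card = k + s := by
        have h1 : u.1ᶜ \ v.1 = (u.1 ∪ v.1)ᶜ := by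
          ext a
          simp only [Finset.mem_sdiff, Finset.mem_compl, Finset.mem_union]
          tauto
        rw [h1, Finset.card_compl]
        have h2 : (u.1 ∪ v.1).card + (u.1 ∩ v.1).card = u.1.card + v.1.card :=
          Finset.card_union_add_card_inter _ _
        rw [u.2, v.2] at h2
        simp only [Fintype.card_fin]
        have hsn : s < n := inter_card_lt u v huv
        omega
      -- construct x disjoint from u with small intersection with v
      have hx : ∃ x : KV n k, Disjoint u.1 x.1 ∧ (x.1 ∩ v.1).card ≤ j * k := by
        by_cases hcase : n ≤ k + s
        · obtain ⟨x', hx'sub, hx'card⟩ := Finset.exists_subset_card_eq (s := u.1ᶜ \ v.1) (n := n) (by rw [hBcard]; omega)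
          refine ⟨⟨x', hx'card⟩, ?_, ?_⟩
          · rw [Finset.disjoint_right]
            intro a ha
            have := hx'sub ha
            rw [Finset.mem_sdiff, Finset.mem_compl] at this
            exact this.1
          · have : x' ∩ v.1 = ∅ := by
              rw [← Finset.disjoint_iff_inter_eq_empty, Finset.disjoint_left]
              intro a ha
              have := hx'sub ha
              rw [Finset.mem_sdiff] at this
              exact this.2
            simp [this]
        · push_neg at hcase
          have hsub : u.1ᶜ \ v.1 ⊆ u.1ᶜ := Finset.sdiff_subset
          obtain ⟨x', hBx', hx'A, hx'card⟩ := Finset.exists_subsuperset_card_eq (n := n) hsub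
            (by rw [hBcard]; omega) (by rw [card_compl]; omega)
          refine ⟨⟨x', hx'card⟩, ?_, ?_⟩
          · rw [Finset.disjoint_right]
            intro a ha
            have := hx'A ha
            rwa [Finset.mem_compl] at this
          · show (x' ∩ v.1).card ≤ j * k
            have hdiff : x' \ v.1 = u.1ᶜ \ v.1 := by
              apply Finset.Subset.antisymm
              · intro a ha
                rw [Finset.mem_sdiff] at ha ⊢
                exact ⟨hx'A ha.1, ha.2⟩
              · intro a ha
                rw [Finset.mem_sdiff] at ha ⊢
                exact ⟨hBx' (by rw [Finset.mem_sdiff]; exact ha), ha.2⟩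
            have h3 : (x' \ v.1).card + (x' ∩ v.1).card = x'.card :=
              Finset.card_sdiff_add_card_inter _ _
            rw [hdiff, hBcard, hx'card] at h3
            have hkk : (j+1)*k = j*k + k := by ring
            omega
      obtain ⟨x, hdisj, hxv⟩ := hx
      obtain ⟨q, hq⟩ := IH.2 x v hxv
      exact ⟨SimpleGraph.Walk.cons (adj_of_disjoint hn u x hdisj) q, by
        simp only [SimpleGraph.Walk.length_cons]; omega⟩
    refine ⟨claim1, ?_⟩
    intro u v hle
    by_cases huv : u = v
    · subst huv
      exact ⟨SimpleGraph.Walk.nil, by simp only [SimpleGraph.Walk.length_nil]; omega⟩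
    · set s := (u.1 ∩ v.1).card with hs
      have hBsub : v.1 \ u.1 ⊆ u.1ᶜ := by
        intro a ha
        rw [Finset.mem_sdiff] at ha
        rw [Finset.mem_compl]
        exact ha.2
      have hBcard : (v.1 \ u.1).card = n - s := by
        have := Finset.card_sdiff_add_card_inter v.1 u.1
        rw [v.2, Finset.inter_comm] at this
        omega
      obtain ⟨x', hBx', hx'A, hx'card⟩ := Finset.exists_subsuperset_card_eq (n := n) hBsub
        (by rw [hBcard]; omega) (by rw [card_compl]; omega)
      have hdisj : Disjoint u.1 x' := by
        rw [Finset.disjoint_right]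
        intro a ha
        have := hx'A ha
        rwa [Finset.mem_compl] at this
      set x : KV n k := ⟨x', hx'card⟩ with hxdef
      have hx1 : x.1 = x' := rfl
      have hxv : n ≤ (x.1 ∩ v.1).card + (j+1)*k := by
        rw [hx1]
        have hsub2 : v.1 \ u.1 ⊆ x' ∩ v.1 := by
          intro a ha
          rw [Finset.mem_inter]
          exact ⟨hBx' ha, (Finset.mem_sdiff.mp ha).1⟩
        have := Finset.card_le_card hsub2
        rw [hBcard] at this
        have hsn : s < n := inter_card_lt u v huv
        omega
      have hdisjx : Disjoint u.1 x.1 := hx1 ▸ hdisj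
      by_cases hxveq : x = v
      · subst hxveq
        refine ⟨(adj_of_disjoint hn u x hdisjx).toWalk, ?_⟩
        simp only [SimpleGraph.Adj.toWalk, SimpleGraph.Walk.length_cons,
          SimpleGraph.Walk.length_nil]
        omega
      · obtain ⟨q, hq⟩ := claim1 x v hxveq hxv
        exact ⟨SimpleGraph.Walk.cons (adj_of_disjoint hn u x hdisjx) q, by
          simp only [SimpleGraph.Walk.length_cons]; omega⟩

lemma walk_lb {n k : ℕ} : ∀ {u v : KV n k}
    (p : (KneserGraph (2*n+k) n).Walk u v) (j : ℕ),
    (p.length = 2*j → n ≤ (u.1 ∩ v.1).card + j*k) ∧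
    (p.length = 2*j+1 → (u.1 ∩ v.1).card ≤ j*k) := by
  intro u v p
  induction p with
  | @nil v =>
    intro j
    constructor
    · intro _
      have : (v.1 ∩ v.1).card = n := by rw [Finset.inter_self, v.2]
      omega
    · intro h
      simp only [SimpleGraph.Walk.length_nil] at h
      omega
  | @cons u w v h q IH =>
    intro j
    -- key inequalities
    have hdisj : Disjoint u.1 w.1 := (h : Disjoint u.1 w.1 ∧ u ≠ w).1
    have key1 : (u.1 ∩ v.1).card + (w.1 ∩ v.1).card ≤ n := by
      have hd : Disjoint (u.1 ∩ v.1) (w.1 ∩ v.1) :=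
        hdisj.mono Finset.inter_subset_left Finset.inter_subset_left
      have := Finset.card_union_of_disjoint hd
      have hsub : (u.1 ∩ v.1) ∪ (w.1 ∩ v.1) ⊆ v.1 :=
        Finset.union_subset Finset.inter_subset_right Finset.inter_subset_right
      have := Finset.card_le_card hsub
      rw [v.2] at this
      omega
    have key2 : n ≤ (u.1 ∩ v.1).card + (w.1 ∩ v.1).card + k := by
      have hsplit : (v.1 ∩ (u.1 ∪ w.1)).card + (v.1 \ (u.1 ∪ w.1)).card = n := by
        have := Finset.card_inter_add_card_sdiff v.1 (u.1 ∪ w.1)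
        rw [v.2] at this
        exact this
      have h1 : v.1 ∩ (u.1 ∪ w.1) = (u.1 ∩ v.1) ∪ (w.1 ∩ v.1) := by
        ext a
        simp only [Finset.mem_inter, Finset.mem_union]
        tauto
      have h2 : (v.1 \ (u.1 ∪ w.1)).card ≤ k := by
        have hsub : v.1 \ (u.1 ∪ w.1) ⊆ (u.1 ∪ w.1)ᶜ := by
          intro a ha
          rw [Finset.mem_compl]
          exact (Finset.mem_sdiff.mp ha).2
        have hcard : ((u.1 ∪ w.1)ᶜ).card = k := by
          rw [Finset.card_compl, Finset.card_union_of_disjoint hdisj, u.2, w.2]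
          simp only [Fintype.card_fin]
          omega
        have := Finset.card_le_card hsub
        omega
      have h3 : ((u.1 ∩ v.1) ∪ (w.1 ∩ v.1)).card ≤ (u.1 ∩ v.1).card + (w.1 ∩ v.1).card :=
        Finset.card_union_le _ _
      rw [h1] at hsplit
      omega
    constructor
    · intro hlen
      simp only [SimpleGraph.Walk.length_cons] at hlen
      obtain ⟨j', rfl⟩ : ∃ j', j = j' + 1 := ⟨j - 1, by omega⟩
      have hq : q.length = 2*j' + 1 := by omega
      have := (IH j').2 hq
      have hkk : (j'+1)*k = j'*k + k := by ring
      omega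
    · intro hlen
      simp only [SimpleGraph.Walk.length_cons] at hlen
      have hq : q.length = 2*j := by omega
      have := (IH j).1 hq
      omega

def cdiv (k x : ℕ) : ℕ := (x + k - 1)/k

lemma cdiv_le {k : ℕ} (hk : 0 < k) (x : ℕ) : x ≤ cdiv k x * k := by
  have h := Nat.lt_div_mul_add (a := x + k - 1) hk
  unfold cdiv
  set d := (x + k - 1)/k with hd
  omega

lemma cdiv_lt {k : ℕ} (hk : 0 < k) (x : ℕ) : cdiv k x * k < x + k := by
  have h := Nat.div_mul_le_self (x + k - 1) k
  unfold cdiv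
  set d := (x + k - 1)/k with hd
  omega

lemma Hkey (n k c : ℕ) (hn : 0 < n) (hk : 0 < k) (hc1 : n - 1 ≤ c * k)
    (hc2 : c * k < (n - 1) + k) :
    Hfun n k + (c * k - (n - 1)) = k - 1 := by
  obtain ⟨m, hm⟩ : ∃ m, c * k = m := ⟨_, rfl⟩
  obtain ⟨e, he⟩ : ∃ e, m = (n - 1) + e := ⟨m - (n - 1), by omega⟩
  have hgoal : c * k - (n - 1) = e := by rw [hm]; omega
  rw [hgoal]
  have hek : e ≤ k - 1 := by omega
  unfold Hfun
  rcases Nat.eq_zero_or_pos e with he0 | hepos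
  · have hnval : n = c * k + 1 := by rw [hm]; omega
    rcases eq_or_lt_of_le (show 1 ≤ k from hk) with hk1 | hk2
    · have hmod : n % k = 0 := by rw [← hk1]; exact Nat.mod_one n
      rw [hmod, if_pos (by omega)]
      omega
    · have hmod : n % k = 1 := by
        rw [hnval, mul_comm c k, Nat.mul_add_mod, Nat.mod_eq_of_lt hk2]
      rw [hmod, if_pos (by omega)]
      omega
  · have hk2 : 2 ≤ k := by omega
    rcases eq_or_lt_of_le (show 1 ≤ e from hepos) with he1 | he2
    · have hnval : n = c * k := by rw [hm]; omega
      have hmod : n % k = 0 := by rw [hnval]; exact Nat.mul_mod_left c k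
      rw [hmod, if_pos (by omega)]
      omega
    · have hcpos : 0 < c := by
        rcases Nat.eq_zero_or_pos c with h | h
        · exfalso; rw [h, zero_mul] at hm; omega
        · exact h
      have hsub : (c - 1) * k = c * k - k := by rw [Nat.sub_mul, one_mul]
      have hkm : k ≤ m := by
        have h1k : 1 * k ≤ c * k := Nat.mul_le_mul_right k hcpos
        rw [one_mul, hm] at h1k
        exact h1k
      have key : n = (k + 1 - e) + (c - 1) * k := by rw [hsub, hm]; omega
      have hmod : n % k = k + 1 - e := by
        rw [key, Nat.add_mul_mod_self_right, Nat.mod_eq_of_lt (by omega)]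
      rw [hmod, if_neg (by omega)]
      omega

lemma q_bounds (n k : ℕ) (hk : 0 < k) :
    (n : ℤ) - 1 ≤ ⌈((n : ℚ) - 1) / (2 * k)⌉ * (2 * k) ∧
    (⌈((n : ℚ) - 1) / (2 * k)⌉ : ℤ) * (2 * k) < (n : ℤ) - 1 + 2 * k := by
  set q := ⌈((n : ℚ) - 1) / (2 * k)⌉ with hq
  have hk2 : (0 : ℚ) < 2 * k := by positivity
  have hA : ((n : ℚ) - 1) ≤ (q : ℚ) * (2 * k) :=
    (div_le_iff₀ hk2).mp (Int.le_ceil _)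
  have hB : (q : ℚ) * (2 * k) < ((n : ℚ) - 1) + 2 * k := by
    have h1 : (q : ℚ) < ((n : ℚ) - 1) / (2 * k) + 1 := Int.ceil_lt_add_one _
    have h2 : ((q : ℚ) - 1) * (2 * k) < (n : ℚ) - 1 := by
      rw [← lt_div_iff₀ hk2]; linarith
    nlinarith
  constructor
  · exact_mod_cast hA
  · exact_mod_cast hB

lemma int_one_le_of_mul {a k : ℤ} (hk : 0 < k) (h : 1 ≤ a * k) : 1 ≤ a := by nlinarith

lemma int_lt_of_mul {a b k : ℤ} (hk : 0 < k) (h : a * k < b * k) : a < b :=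
  lt_of_mul_lt_mul_right h hk.le

/-- Even-length lower bound arithmetic. -/
lemma arith_even (n k s j c : ℕ) (hn : 0 < n) (hk : 0 < k)
    (hc1 : n - 1 ≤ c * k) (hc2 : c * k < (n - 1) + k)
    (h2 : (s : ℤ) ≤ pInt n k + (Hfun n k : ℤ))
    (hj : n ≤ s + j * k) : c + 1 ≤ 2 * j := by
  set q := ⌈((n : ℚ) - 1) / (2 * k)⌉ with hqdef
  obtain ⟨hq1, hq2⟩ := q_bounds n k hk
  have hp : pInt n k = (q - 1) * k + 1 := rfl
  have hH : (Hfun n k : ℤ) = (k : ℤ) - 1 - ((c : ℤ) * k - ((n : ℤ) - 1)) := by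
    have h := Hkey n k c hn hk hc1 hc2
    have hc1' : ((n : ℤ) - 1) ≤ (c : ℤ) * k := by
      have : ((n - 1 : ℕ) : ℤ) ≤ ((c * k : ℕ) : ℤ) := by exact_mod_cast hc1
      push_cast at this
      omega
    zify [hc1, hn, hk] at h
    push_cast at h ⊢
    omega
  have hjZ : (n : ℤ) ≤ (s : ℤ) + (j : ℤ) * k := by exact_mod_cast hj
  -- s ≤ q*k - c*k + n - 1
  have hs2 : (s : ℤ) ≤ (q : ℤ) * k - (c : ℤ) * k + (n : ℤ) - 1 := by
    rw [hp] at h2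
    rw [hH] at h2
    have : ((q : ℤ) - 1) * k + 1 = q * k - k + 1 := by ring
    linarith [h2, this.le, this.ge]
  have hmul : 1 ≤ ((j : ℤ) + q - c) * k := by
    have : ((j : ℤ) + q - c) * k = (j : ℤ) * k + (q : ℤ) * k - (c : ℤ) * k := by ring
    linarith
  have hjqc : 1 ≤ (j : ℤ) + q - c := int_one_le_of_mul (by exact_mod_cast hk) hmul
  -- 2q ≤ c + 1
  have h2q : 2 * q ≤ (c : ℤ) + 1 := by
    have hc1' : ((n : ℤ) - 1) ≤ (c : ℤ) * k := by
      have : ((n - 1 : ℕ) : ℤ) ≤ ((c * k : ℕ) : ℤ) := by exact_mod_cast hc1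
      push_cast at this; omega
    have hlt : (2 * q) * k < ((c : ℤ) + 2) * k := by nlinarith
    have := int_lt_of_mul (b := (c : ℤ) + 2) (by exact_mod_cast hk) hlt
    omega
  have : (c : ℤ) + 1 ≤ 2 * j := by linarith
  exact_mod_cast this

/-- Odd-length lower bound arithmetic. -/
lemma arith_odd (n k s j c : ℕ) (hn : 0 < n) (hk : 0 < k)
    (hc2 : c * k < (n - 1) + k)
    (h1 : pInt n k ≤ (s : ℤ))
    (hj : s ≤ j * k) : c + 1 ≤ 2 * j + 1 := by
  set q := ⌈((n : ℚ) - 1) / (2 * k)⌉ with hqdef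
  obtain ⟨hq1, hq2⟩ := q_bounds n k hk
  have hp : pInt n k = (q - 1) * k + 1 := rfl
  rw [hp] at h1
  have hjZ : (s : ℤ) ≤ (j : ℤ) * k := by exact_mod_cast hj
  have hmul : 1 ≤ ((j : ℤ) - q + 1) * k := by
    have : ((j : ℤ) - q + 1) * k = (j : ℤ) * k - ((q : ℤ) - 1) * k := by ring
    linarith
  have hjq : (q : ℤ) ≤ (j : ℤ) := by
    have := int_one_le_of_mul (by exact_mod_cast hk : (0:ℤ) < k) hmul
    omega
  have hc2' : (c : ℤ) * k < ((n : ℤ) - 1) + k := by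
    have : ((c * k : ℕ) : ℤ) < (((n - 1) + k : ℕ) : ℤ) := by exact_mod_cast hc2
    push_cast at this
    omega
  have hcq : (c : ℤ) < 2 * q + 1 := by
    have hlt : (c : ℤ) * k < ((2 * q + 1)) * k := by nlinarith
    exact int_lt_of_mul (by exact_mod_cast hk) hlt
  have : (c : ℤ) + 1 ≤ 2 * (j : ℤ) + 1 := by omega
  exact_mod_cast this


end KneserAux

open KneserAux in
theorem dist_eq_diam_of_intersection_bounds
    (n k : ℕ) (hn : 0 < n) (hk : 0 < k)
    (u v : {s : Finset (Fin (2 * n + k)) // s.card = n}) (huv : u ≠ v)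
    (s : ℕ) (hs : s = (u.1 ∩ v.1).card)
    (h1 : pInt n k ≤ (s : ℤ))
    (h2 : (s : ℤ) ≤ pInt n k + (Hfun n k : ℤ)) :
    (KneserGraph (2 * n + k) n).dist u v = (KneserGraph (2 * n + k) n).diam := by
  classical
  set G := KneserGraph (2 * n + k) n with hG
  set c := cdiv k (n - 1) with hc
  have hc1 : n - 1 ≤ c * k := cdiv_le hk _
  have hc2 : c * k < (n - 1) + k := cdiv_lt hk _
  -- upper bound: every pair of vertices is joined by a walk of length ≤ c + 1
  have hupper : ∀ x y : KV n k, ∃ p : G.Walk x y, p.length ≤ c + 1 := by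
    intro x y
    by_cases hxy : x = y
    · subst hxy
      exact ⟨SimpleGraph.Walk.nil, by simp⟩
    · have ht : (x.1 ∩ y.1).card < n := inter_card_lt x y hxy
      set t := (x.1 ∩ y.1).card with htdef
      set a := cdiv k t with ha
      set b := cdiv k (n - t) with hb
      by_cases hcase : 2 * a + 1 ≤ c + 1
      · obtain ⟨p, hp⟩ := (exists_walk hn hk a).2 x y (cdiv_le hk t)
        exact ⟨p, le_trans hp hcase⟩
      · have hbb : 2 * b ≤ c + 1 := by
          by_contra hbb
          push_neg at hcase hbb
          have hab : c + 2 ≤ a + b := by omega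
          have hmul : (c + 2) * k ≤ (a + b) * k := Nat.mul_le_mul_right k hab
          have e1 : (c + 2) * k = c * k + 2 * k := by ring
          have e2 : (a + b) * k = a * k + b * k := by ring
          rw [e1, e2] at hmul
          have hak : a * k < t + k := cdiv_lt hk t
          have hbk : b * k < (n - t) + k := cdiv_lt hk (n - t)
          omega
        have hnle : n ≤ t + b * k := by
          have hx := cdiv_le hk (n - t)
          rw [← hb] at hx
          omega
        obtain ⟨p, hp⟩ := (exists_walk hn hk b).1 x y hxy hnle
        exact ⟨p, by omega⟩
  -- reachability and a geodesic
  have hreach : G.Reachable u v := by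
    have hnnk : n ≤ n * k := by
      have := Nat.mul_le_mul_left n hk
      simpa using this
    have hcard : (u.1 ∩ v.1).card ≤ n * k := by
      have := inter_card_lt u v huv
      omega
    obtain ⟨p0, _⟩ := (exists_walk hn hk n).2 u v hcard
    exact ⟨p0⟩
  obtain ⟨p, hp⟩ := hreach.exists_walk_length_eq_dist
  -- lower bound on dist u v
  have hlb : c + 1 ≤ G.dist u v := by
    rcases Nat.even_or_odd p.length with ⟨j, hj⟩ | ⟨j, hj⟩
    · have hwe := (walk_lb p j).1 (by omega)
      rw [← hs] at hwe
      have := arith_even n k s j c hn hk hc1 hc2 h2 hwe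
      omega
    · have hwe := (walk_lb p j).2 (by omega)
      rw [← hs] at hwe
      have := arith_odd n k s j c hn hk hc2 h1 hwe
      omega
  -- dist u v = c + 1
  have hduv : G.dist u v = c + 1 := by
    obtain ⟨pw, hpw⟩ := hupper u v
    exact le_antisymm (le_trans (SimpleGraph.dist_le pw) hpw) hlb
  -- diameter bounds
  have hediam : G.ediam ≤ ((c + 1 : ℕ) : ℕ∞) := by
    apply SimpleGraph.ediam_le_of_edist_le
    intro x y
    obtain ⟨pw, hpw⟩ := hupper x y
    exact le_trans (SimpleGraph.edist_le pw) (by exact_mod_cast Nat.cast_le.mpr hpw)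
  have hcast : ((c + 1 : ℕ) : ℕ∞) ≠ ⊤ := ENat.coe_ne_top _
  have hnetop : G.ediam ≠ ⊤ := ne_top_of_le_ne_top hcast hediam
  have hdiam_le : G.diam ≤ c + 1 := by
    have h := ENat.toNat_le_toNat hediam hcast
    rw [ENat.toNat_coe] at h; exact h
  have h_le_diam : G.dist u v ≤ G.diam := SimpleGraph.dist_le_diam hnetop
  omega
end

section
/- Let n and k be positive integers, and let u and v be distinct vertices of the Kneser graph K(2n+k,n) with s = |u ∩ v|. If dist(u,v) = diam(K(2n+k,n)), then (⌈(n-1)/(2k)⌉ - 1)·k + 1 ≤ s ≤ (⌈(n-1)/(2k)⌉ - 1)·k + 1 + H(n,k). -/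
section KneserAux
/-- ceiling division -/
def cdiv (a k : ℕ) : ℕ := (a + k - 1) / k

lemma cdiv_mul_ge {k : ℕ} (hk : 0 < k) (a : ℕ) : a ≤ cdiv a k * k := by
  unfold cdiv
  have h1 := Nat.div_add_mod (a + k - 1) k
  have h2 := Nat.mod_lt (a + k - 1) hk
  set q := (a + k - 1) / k with hq
  set r := (a + k - 1) % k with hr
  have : q * k = k * q := Nat.mul_comm _ _
  set x := k * q
  omega

lemma cdiv_mul_lt {k : ℕ} (hk : 0 < k) (a : ℕ) : cdiv a k * k < a + k := by
  unfold cdiv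
  have h1 := Nat.div_add_mod (a + k - 1) k
  set q := (a + k - 1) / k with hq
  set r := (a + k - 1) % k with hr
  have : q * k = k * q := Nat.mul_comm _ _
  set x := k * q
  omega

lemma cdiv_le_of {k t a : ℕ} (hk : 0 < k) (h : a ≤ t * k) : cdiv a k ≤ t := by
  have h1 := cdiv_mul_lt hk a
  have : cdiv a k * k < (t + 1) * k := by
    calc cdiv a k * k < a + k := h1
    _ ≤ t * k + k := by omega
    _ = (t + 1) * k := by ring
  exact Nat.lt_succ_iff.mp (Nat.lt_of_mul_lt_mul_right this)

lemma le_cdiv_of {k t a : ℕ} (hk : 0 < k) (h : (t - 1) * k + 1 ≤ a) : t ≤ cdiv a k := by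
  by_contra hc
  push_neg at hc
  have : cdiv a k ≤ t - 1 := by omega
  have := Nat.mul_le_mul_right k this
  have := cdiv_mul_ge hk a
  omega

lemma cdiv_eq_of {k a c : ℕ} (hk : 0 < k) (h1 : a ≤ c * k) (h2 : c * k < a + k) :
    cdiv a k = c := by
  have hle : cdiv a k ≤ c := cdiv_le_of hk h1
  have h3 := cdiv_mul_ge hk a
  have h4 : c * k < cdiv a k * k + k := by omega
  have : c * k < (cdiv a k + 1) * k := by rw [add_mul]; omega
  have := Nat.lt_of_mul_lt_mul_right this
  omega

lemma cdiv_two (m : ℕ) : cdiv m 2 = (m + 1) / 2 := rfl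

/-- nested ceiling -/
lemma cdiv_cdiv (a k : ℕ) (hk : 0 < k) : cdiv (cdiv a k) 2 = cdiv a (2 * k) := by
  set c := cdiv a k with hc
  set b := cdiv c 2 with hb
  have h2k : 0 < 2 * k := by omega
  refine (cdiv_eq_of h2k ?_ ?_).symm
  · have h1 : a ≤ c * k := cdiv_mul_ge hk a
    have h2 : c ≤ b * 2 := cdiv_mul_ge (by norm_num) c
    calc a ≤ c * k := h1
    _ ≤ b * 2 * k := Nat.mul_le_mul_right k h2
    _ = b * (2 * k) := by ring
  · have h1 : c * k < a + k := cdiv_mul_lt hk a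
    have h2 : b * 2 < c + 2 := cdiv_mul_lt (by norm_num) c
    have : b * (2 * k) = b * 2 * k := by ring
    rw [this]
    calc b * 2 * k ≤ (c + 1) * k := Nat.mul_le_mul_right k (by omega)
    _ = c * k + k := by ring
    _ < a + k + k := by omega
    _ = a + 2 * k := by ring

lemma ceil_cast_div (m d : ℕ) (hd : 0 < d) : ⌈(m : ℚ) / d⌉ = (cdiv m d : ℤ) := by
  have hdq : (0 : ℚ) < d := by exact_mod_cast hd
  rw [Int.ceil_eq_iff]
  have h1 : m ≤ cdiv m d * d := cdiv_mul_ge hd m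
  have h2 : cdiv m d * d < m + d := cdiv_mul_lt hd m
  constructor
  · rw [lt_div_iff₀ hdq]
    have : ((cdiv m d * d : ℕ) : ℚ) < ((m + d : ℕ) : ℚ) := by exact_mod_cast h2
    push_cast at this ⊢
    ring_nf
    ring_nf at this
    linarith
  · rw [div_le_iff₀ hdq]
    have : ((m : ℕ) : ℚ) ≤ ((cdiv m d * d : ℕ) : ℚ) := by exact_mod_cast h1
    push_cast at this ⊢
    linarith

lemma pInt_eq (n k : ℕ) (hn : 0 < n) (hk : 0 < k) :
    pInt n k = ((cdiv (n - 1) (2 * k) : ℤ) - 1) * k + 1 := by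
  unfold pInt
  have hcast : ((n : ℚ) - 1) = ((n - 1 : ℕ) : ℚ) := by
    push_cast [Nat.cast_sub hn]; ring
  have h2 : ((2 : ℚ) * k) = ((2 * k : ℕ) : ℚ) := by push_cast; ring
  rw [hcast, h2, ceil_cast_div _ _ (by omega)]

/-- Hfun identity -/
lemma Hfun_eq (n k : ℕ) (hn : 0 < n) (hk : 0 < k) :
    (Hfun n k : ℤ) = (n : ℤ) + k - 2 - k * cdiv (n - 1) k := by
  set r := cdiv (n - 1) k with hr
  have h1 : (n - 1 : ℕ) ≤ r * k := cdiv_mul_ge hk _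
  have h2 : r * k < (n - 1) + k := cdiv_mul_lt hk _
  have hmod := Nat.div_add_mod n k
  have hmlt : n % k < k := Nat.mod_lt n hk
  set a := n / k with ha
  set m := n % k with hm
  rcases Nat.eq_or_lt_of_le hk with hk1 | hk2
  · -- k = 1
    have hk1 : k = 1 := hk1.symm
    subst hk1
    have hr1 : r = n - 1 := by omega
    simp [Hfun, hr1]
    push_cast
    omega
  · -- k ≥ 2
    have hrval : r = if m = 0 ∨ m = 1 then a else a + 1 := by
      split_ifs with hcase
      · refine cdiv_eq_of hk ?_ ?_ <;>
        · have hka : k * a = a * k := Nat.mul_comm _ _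
          set x := a * k with hx
          omega
      · refine cdiv_eq_of hk ?_ ?_ <;>
        · have hka : k * a = a * k := Nat.mul_comm _ _
          have : (a + 1) * k = a * k + k := by ring
          set x := a * k with hx
          omega
    unfold Hfun
    rw [← hm]
    split_ifs with hcase
    · -- m ≤ 1
      have : r = a := by rw [hrval]; simp; omega
      rw [this]
      have hka : (k : ℤ) * a = ((k * a : ℕ) : ℤ) := by push_cast; ring
      rw [hka]
      push_cast
      omega
    · -- m ≥ 2
      have : r = a + 1 := by rw [hrval]; simp; omega
      rw [this]
      have hka : (k : ℤ) * (a + 1 : ℕ) = ((k * (a+1) : ℕ) : ℤ) := by push_cast; ring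
      rw [hka]
      have : k * (a + 1) = k * a + k := by ring
      rw [this]
      push_cast
      omega

/-- the distance function of the Kneser graph, as a function of s = |u ∩ v| -/
def Dnat (n k s : ℕ) : ℕ := min (2 * cdiv (n - s) k) (2 * cdiv s k + 1)

lemma arith_A1 (n k : ℕ) (hn : 0 < n) (hk : 0 < k) :
    ∃ t ≤ n - 1, cdiv (n - 1) k + 1 ≤ Dnat n k t := by
  set r := cdiv (n - 1) k with hr
  set b := cdiv (r + 1) 2 with hb
  have hb1 : 1 ≤ b := by rw [hb, cdiv_two]; omega
  have hrk1 : (n - 1 : ℕ) ≤ r * k := cdiv_mul_ge hk _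
  have hrk2 : r * k < (n - 1) + k := cdiv_mul_lt hk _
  have hbk : (b - 1) * k ≤ n - 1 := by
    rcases Nat.lt_or_ge r 2 with hr2 | hr2
    · have : b = 1 := by rw [hb, cdiv_two]; omega
      simp [this]
    · have hble : b - 1 ≤ r - 1 := by rw [hb, cdiv_two]; omega
      have h3 : (b - 1) * k ≤ (r - 1) * k := Nat.mul_le_mul_right k hble
      have h4 : (r - 1) * k = r * k - k := Nat.sub_one_mul r k
      omega
  refine ⟨n - 1 - (b - 1) * k, by omega, ?_⟩
  set t := n - 1 - (b - 1) * k with ht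
  have hnt : n - t = (b - 1) * k + 1 := by omega
  · unfold Dnat
    rw [le_min_iff]
    constructor
    · -- r + 1 ≤ 2 * cdiv (n - t) k
      rw [hnt]
      have hbb : (b-1) * k = b * k - k := Nat.sub_one_mul b k
      have hbk2 : k ≤ b * k := Nat.le_mul_of_pos_left k hb1
      have : cdiv ((b - 1) * k + 1) k = b := by
        refine cdiv_eq_of hk (by omega) (by omega)
      rw [this]
      have := cdiv_mul_ge (show 0 < 2 by norm_num) (r + 1)
      omega
    · -- r + 1 ≤ 2 * cdiv t k + 1
      set q := cdiv r 2 with hq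
      have hq2 : r ≤ q * 2 := cdiv_mul_ge (by norm_num) r
      rcases Nat.eq_zero_or_pos q with hq0 | hq0
      · omega
      · have hqle : q ≤ cdiv t k := by
          refine le_cdiv_of hk ?_
          -- (q-1)*k + 1 ≤ t = n-1-(b-1)k  ⇔  (q-1+b-1)k + 2 ≤ n ⇔ (r-1)k ≤ n-2
          have hbq : b + q = r + 1 := by rw [hb, hq, cdiv_two, cdiv_two]; omega
          have hr1 : 1 ≤ r := by omega
          have key : (r - 1) * k = r * k - k := Nat.sub_one_mul r k
          have hsum : (q - 1) * k + (b - 1) * k = (r - 1) * k := by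
            rw [← Nat.add_mul]
            congr 1
            omega
          have hkr : k ≤ r * k := Nat.le_mul_of_pos_left k hr1
          omega
        have := Nat.mul_le_mul_right 1 hqle
        omega

lemma arith_A2 (n k s : ℕ) (hn : 0 < n) (hk : 0 < k) (hs : s ≤ n - 1)
    (h : cdiv (n - 1) k + 1 ≤ Dnat n k s) :
    pInt n k ≤ (s : ℤ) ∧ (s : ℤ) ≤ pInt n k + (Hfun n k : ℤ) := by
  rw [pInt_eq n k hn hk, Hfun_eq n k hn hk]
  set r := cdiv (n - 1) k with hr
  set q := cdiv (n - 1) (2 * k) with hq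
  have hqr : q = cdiv r 2 := by rw [hq, hr, cdiv_cdiv _ _ hk]
  unfold Dnat at h
  rw [le_min_iff] at h
  obtain ⟨h1, h2⟩ := h
  constructor
  · -- lower bound
    have hcs : q ≤ cdiv s k := by
      rw [hqr]
      refine cdiv_le_of (by norm_num) ?_
      omega
    rcases Nat.eq_zero_or_pos q with hq0 | hq0
    · rw [hq0]; push_cast; nlinarith [Nat.zero_le s, hk]
    · have : (q - 1) * k + 1 ≤ s := by
        by_contra hc
        push_neg at hc
        have : cdiv s k ≤ q - 1 := cdiv_le_of hk (by omega)
        omega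
      have := this
      zify at this
      rw [Nat.cast_sub hq0] at this
      push_cast at this ⊢
      linarith
  · -- upper bound
    set b := cdiv (r + 1) 2 with hb
    have hbc : b ≤ cdiv (n - s) k := by
      rw [hb]
      refine cdiv_le_of (by norm_num) (by omega)
    have hck : cdiv (n - s) k * k < (n - s) + k := cdiv_mul_lt hk _
    have hbk : b * k < (n - s) + k := by
      calc b * k ≤ cdiv (n - s) k * k := Nat.mul_le_mul_right k hbc
      _ < _ := hck
    have hkey : s + b * k < n + k := by omega
    have hbq : b + q = r + 1 := by rw [hb, hqr, cdiv_two, cdiv_two]; omega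
    -- goal: s ≤ (q-1)k+1 + (n+k-2-kr) = n-1+k(q-r) = n-1-k(b-1)
    have hZ : ((s : ℤ) + b * k) < (n : ℤ) + k := by exact_mod_cast hkey
    have hbqZ : (b : ℤ) + q = (r : ℤ) + 1 := by exact_mod_cast hbq
    nlinarith [hZ, hbqZ]

variable {n k : ℕ}
abbrev KV (n k : ℕ) := {s : Finset (Fin (2 * n + k)) // s.card = n}

/-- walk invariant: along any walk, intersections with the endpoints evolve slowly -/
lemma kneser_walk_inv (x y : KV n k) (p : (KneserGraph (2 * n + k) n).Walk x y) :
    (Even p.length → (n : ℤ) ≤ ((x.1 ∩ y.1).card : ℤ) + ((p.length / 2 : ℕ) : ℤ) * k) ∧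
    (Odd p.length → ((x.1 ∩ y.1).card : ℤ) ≤ ((p.length / 2 : ℕ) : ℤ) * k) := by
  induction p with
  | nil =>
    rename_i z
    simp only [SimpleGraph.Walk.length_nil]
    constructor
    · intro _
      rw [Finset.inter_self, z.2]
      simp
    · intro h; exact absurd h (by decide)
  | @cons x w y hadj q ih =>
    have hdisj : Disjoint x.1 w.1 := hadj.1
    simp only [SimpleGraph.Walk.length_cons]
    obtain ⟨ihE, iho⟩ := ih
    have hcards : (x.1 ∩ y.1).card + (w.1 ∩ y.1).card ≤ n := by
      have hd2 : Disjoint (x.1 ∩ y.1) (w.1 ∩ y.1) :=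
        hdisj.mono (Finset.inter_subset_left) (Finset.inter_subset_left)
      have := Finset.card_union_of_disjoint hd2
      have hsub : (x.1 ∩ y.1) ∪ (w.1 ∩ y.1) ⊆ y.1 := by
        apply Finset.union_subset <;> exact Finset.inter_subset_right
      have := Finset.card_le_card hsub
      rw [y.2] at this
      omega
    have hbig : n ≤ (x.1 ∩ y.1).card + (w.1 ∩ y.1).card + k := by
      -- y ⊆ (y∩x) ∪ (y∩w) ∪ (y \ (x ∪ w)), and |y \ (x∪w)| ≤ k
      have hsub : y.1 ⊆ (x.1 ∩ y.1) ∪ (w.1 ∩ y.1) ∪ (y.1 \ (x.1 ∪ w.1)) := by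
        intro a ha
        simp only [Finset.mem_union, Finset.mem_inter, Finset.mem_sdiff]
        by_cases hx : a ∈ x.1
        · exact Or.inl (Or.inl ⟨hx, ha⟩)
        by_cases hw : a ∈ w.1
        · exact Or.inl (Or.inr ⟨hw, ha⟩)
        · exact Or.inr ⟨ha, by simp [hx, hw]⟩
      have hcard1 := Finset.card_le_card hsub
      have hcard2 : ((x.1 ∩ y.1) ∪ (w.1 ∩ y.1) ∪ (y.1 \ (x.1 ∪ w.1))).card ≤
          (x.1 ∩ y.1).card + (w.1 ∩ y.1).card + (y.1 \ (x.1 ∪ w.1)).card := by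
        calc _ ≤ ((x.1 ∩ y.1) ∪ (w.1 ∩ y.1)).card + (y.1 \ (x.1 ∪ w.1)).card :=
              Finset.card_union_le _ _
        _ ≤ _ := by
              have := Finset.card_union_le (x.1 ∩ y.1) (w.1 ∩ y.1)
              omega
      have hsd : (y.1 \ (x.1 ∪ w.1)).card ≤ k := by
        have h1 : (y.1 \ (x.1 ∪ w.1)) ⊆ (x.1 ∪ w.1)ᶜ := by
          intro a ha
          simp only [Finset.mem_sdiff, Finset.mem_union, not_or] at ha
          simp [Finset.mem_compl, Finset.mem_union, ha.2.1, ha.2.2]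
        have h2 := Finset.card_le_card h1
        rw [Finset.card_compl] at h2
        have h3 : (x.1 ∪ w.1).card = 2 * n := by
          rw [Finset.card_union_of_disjoint hdisj, x.2, w.2]; ring
        simp only [Fintype.card_fin] at h2
        omega
      rw [y.2] at hcard1
      omega
    constructor
    · -- q.length + 1 even: q odd
      intro hev
      have hqodd : Odd q.length := by
        rcases Nat.even_or_odd q.length with he | ho
        · exfalso; rw [Nat.even_iff] at hev he; omega
        · exact ho
      have h1 := iho hqodd
      have hdiv : (q.length + 1) / 2 = q.length / 2 + 1 := by
        obtain ⟨m, hm⟩ := hqodd; omega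
      rw [hdiv]
      set m := q.length / 2 with hm
      have hbigZ : (n : ℤ) ≤ ((x.1 ∩ y.1).card : ℤ) + ((w.1 ∩ y.1).card : ℤ) + k := by
        exact_mod_cast hbig
      push_cast
      linarith
    · -- q.length + 1 odd: q even
      intro hodd
      have hqev : Even q.length := by
        rcases Nat.even_or_odd q.length with he | ho
        · exact he
        · exfalso; rw [Nat.odd_iff] at hodd ho; omega
      have h1 := ihE hqev
      have hdiv : (q.length + 1) / 2 = q.length / 2 := by
        obtain ⟨m, hm⟩ := hqev; omega
      rw [hdiv]
      have hcardsZ : ((x.1 ∩ y.1).card : ℤ) + ((w.1 ∩ y.1).card : ℤ) ≤ n := by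
        exact_mod_cast hcards
      linarith

lemma kneser_adj_of_disjoint (hn : 0 < n) (a b : KV n k) (h : Disjoint a.1 b.1) :
    (KneserGraph (2 * n + k) n).Adj a b := by
  refine ⟨h, fun hab => ?_⟩
  subst hab
  rw [disjoint_self] at h
  have := a.2
  rw [h] at this
  simp at this
  omega

lemma kneser_eq_of_inter (u v : KV n k) (h : n ≤ (u.1 ∩ v.1).card) : u = v := by
  have h1 : u.1 ∩ v.1 ⊆ u.1 := Finset.inter_subset_left
  have h2 : u.1 ∩ v.1 = u.1 := Finset.eq_of_subset_of_card_le h1 (by rw [u.2]; exact h)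
  have h3 : u.1 ⊆ v.1 := by rw [← h2]; exact Finset.inter_subset_right
  have h4 : u.1 = v.1 := Finset.eq_of_subset_of_card_le h3 (by rw [u.2, v.2])
  exact Subtype.ext h4

lemma kneser_walk_even (hn : 0 < n) (hk : 0 < k) :
    ∀ (t : ℕ) (u v : KV n k), n ≤ (u.1 ∩ v.1).card + t * k →
    ∃ p : (KneserGraph (2 * n + k) n).Walk u v, p.length ≤ 2 * t := by
  intro t
  induction t with
  | zero =>
    intro u v h
    simp only [Nat.zero_mul, Nat.add_zero] at h
    have e := kneser_eq_of_inter u v h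
    subst e
    exact ⟨SimpleGraph.Walk.nil, by simp⟩
  | succ t ih =>
    intro u v h
    by_cases hcase : n ≤ (u.1 ∩ v.1).card
    · have e := kneser_eq_of_inter u v hcase
      subst e
      exact ⟨SimpleGraph.Walk.nil, by simp⟩
    push_neg at hcase
    set s := (u.1 ∩ v.1).card with hsdef
    set m := min k (n - s) with hm
    have hvu : (v.1 \ u.1).card = n - s := by
      have := Finset.card_inter_add_card_sdiff v.1 u.1
      rw [v.2, Finset.inter_comm] at this
      omega
    have huv : (u.1 \ v.1).card = n - s := by
      have := Finset.card_inter_add_card_sdiff u.1 v.1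
      rw [u.2] at this
      omega
    obtain ⟨B, hBsub, hBcard⟩ := Finset.exists_subset_card_eq
      (show m ≤ (v.1 \ u.1).card by rw [hvu]; omega)
    obtain ⟨A, hAsub, hAcard⟩ := Finset.exists_subset_card_eq
      (show m ≤ (u.1 \ v.1).card by rw [huv]; omega)
    have hAu : A ⊆ u.1 := hAsub.trans (Finset.sdiff_subset)
    have hBu : Disjoint B u.1 := by
      refine Finset.disjoint_left.mpr fun a ha hau => ?_
      have := hBsub ha
      simp only [Finset.mem_sdiff] at this
      exact this.2 hau
    have hucard : (u.1 \ A).card = n - m := by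
      rw [Finset.card_sdiff_of_subset hAu, u.2, hAcard]
    have hdisjBA : Disjoint (u.1 \ A) B := hBu.symm.mono_left Finset.sdiff_subset
    have hu'card : ((u.1 \ A) ∪ B).card = n := by
      rw [Finset.card_union_of_disjoint hdisjBA, hucard, hBcard]
      omega
    set u' : KV n k := ⟨(u.1 \ A) ∪ B, hu'card⟩ with hu'
    -- intersection with v grows
    have hinter : s + m ≤ (u'.1 ∩ v.1).card := by
      have hsub : (u.1 ∩ v.1) ∪ B ⊆ u'.1 ∩ v.1 := by
        apply Finset.union_subset
        · intro a ha
          simp only [Finset.mem_inter] at ha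
          have haA : a ∉ A := fun hA => by
            have := hAsub hA
            simp only [Finset.mem_sdiff] at this
            exact this.2 ha.2
          simp only [hu', Finset.mem_inter, Finset.mem_union, Finset.mem_sdiff]
          exact ⟨Or.inl ⟨ha.1, haA⟩, ha.2⟩
        · intro a ha
          have := hBsub ha
          simp only [Finset.mem_sdiff] at this
          simp only [hu', Finset.mem_inter, Finset.mem_union]
          exact ⟨Or.inr ha, this.1⟩
      have hdisj : Disjoint (u.1 ∩ v.1) B :=
        hBu.symm.mono_left Finset.inter_subset_left
      have := Finset.card_le_card hsub
      rw [Finset.card_union_of_disjoint hdisj, hBcard] at this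
      exact this
    have hIH : n ≤ (u'.1 ∩ v.1).card + t * k := by
      rcases Nat.le_total k (n - s) with hle | hle
      · have : m = k := by omega
        have hmul : (t + 1) * k = t * k + k := by ring
        rw [hmul] at h
        omega
      · have : m = n - s := by omega
        omega
    obtain ⟨q, hq⟩ := ih u' v hIH
    -- middle vertex w
    have hcompl : n ≤ ((u.1 ∪ B)ᶜ : Finset (Fin (2 * n + k))).card := by
      rw [Finset.card_compl]
      have : (u.1 ∪ B).card ≤ n + m := by
        have := Finset.card_union_le u.1 B
        rw [u.2, hBcard] at this
        exact this
      simp only [Fintype.card_fin]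
      omega
    obtain ⟨w0, hwsub, hwcard⟩ := Finset.exists_subset_card_eq hcompl
    set wv : KV n k := ⟨w0, hwcard⟩ with hwv
    have hdisj1 : Disjoint u.1 wv.1 := by
      refine Finset.disjoint_left.mpr fun a ha haw => ?_
      have := hwsub haw
      simp only [Finset.mem_compl, Finset.mem_union] at this
      exact this (Or.inl ha)
    have hdisj2 : Disjoint wv.1 u'.1 := by
      refine Finset.disjoint_left.mpr fun a ha hau' => ?_
      have h1 := hwsub ha
      simp only [Finset.mem_compl, Finset.mem_union] at h1
      simp only [hu', Finset.mem_union, Finset.mem_sdiff] at hau'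
      rcases hau' with ⟨h2, _⟩ | h2
      · exact h1 (Or.inl h2)
      · exact h1 (Or.inr h2)
    have adj1 := kneser_adj_of_disjoint hn u wv hdisj1
    have adj2 := kneser_adj_of_disjoint hn wv u' hdisj2
    refine ⟨SimpleGraph.Walk.cons adj1 (SimpleGraph.Walk.cons adj2 q), ?_⟩
    simp only [SimpleGraph.Walk.length_cons]
    omega

lemma kneser_walk_odd (hn : 0 < n) (hk : 0 < k) (t : ℕ) (u v : KV n k)
    (h : (u.1 ∩ v.1).card ≤ t * k) :
    ∃ p : (KneserGraph (2 * n + k) n).Walk u v, p.length ≤ 2 * t + 1 := by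
  set s := (u.1 ∩ v.1).card with hsdef
  have huv : (u.1 \ v.1).card = n - s := by
    have := Finset.card_inter_add_card_sdiff u.1 v.1
    rw [u.2] at this
    have h1 : (u.1 ∩ v.1).card ≤ u.1.card := Finset.card_le_card Finset.inter_subset_left
    rw [u.2] at h1
    omega
  have hsle : s ≤ n := by
    have h1 : (u.1 ∩ v.1).card ≤ u.1.card := Finset.card_le_card Finset.inter_subset_left
    rw [u.2] at h1
    omega
  have hsub0 : u.1 \ v.1 ⊆ (v.1)ᶜ := by
    intro a ha
    simp only [Finset.mem_sdiff] at ha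
    simp [Finset.mem_compl, ha.2]
  have hcompl : n ≤ ((v.1)ᶜ : Finset (Fin (2 * n + k))).card := by
    rw [Finset.card_compl, v.2]
    simp only [Fintype.card_fin]
    omega
  obtain ⟨w0, hw1, hw2, hwcard⟩ := Finset.exists_subsuperset_card_eq hsub0
    (by rw [huv]; omega) hcompl
  set wv : KV n k := ⟨w0, hwcard⟩ with hwv
  have hinter : n - s ≤ (u.1 ∩ wv.1).card := by
    have : u.1 \ v.1 ⊆ u.1 ∩ wv.1 := by
      intro a ha
      exact Finset.mem_inter.mpr ⟨(Finset.mem_sdiff.mp ha).1, hw1 ha⟩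
    have := Finset.card_le_card this
    omega
  obtain ⟨q, hq⟩ := kneser_walk_even hn hk t u wv (by omega)
  have hdisj : Disjoint wv.1 v.1 := by
    refine Finset.disjoint_left.mpr fun a ha hav => ?_
    have := hw2 ha
    simp only [Finset.mem_compl] at this
    exact this hav
  exact ⟨q.concat (kneser_adj_of_disjoint hn wv v hdisj),
    by rw [SimpleGraph.Walk.length_concat]; omega⟩

/-- existence of a pair with given intersection size -/
lemma kneser_exists_pair (hn : 0 < n) (hk : 0 < k) (t : ℕ) (ht : t ≤ n - 1) :
    ∃ u v : KV n k, (u.1 ∩ v.1).card = t := by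
  obtain ⟨U, hUsub, hUcard⟩ := Finset.exists_subset_card_eq
    (show n ≤ (Finset.univ : Finset (Fin (2 * n + k))).card by simp; omega)
  obtain ⟨B, hBsub, hBcard⟩ := Finset.exists_subset_card_eq
    (show t ≤ U.card by omega)
  have hcompl : n - t ≤ (Uᶜ : Finset (Fin (2 * n + k))).card := by
    rw [Finset.card_compl, hUcard]
    simp only [Fintype.card_fin]
    omega
  obtain ⟨C, hCsub, hCcard⟩ := Finset.exists_subset_card_eq hcompl
  have hdisjBC : Disjoint B C := by
    refine Finset.disjoint_left.mpr fun a ha hac => ?_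
    have h1 := hBsub ha
    have h2 := hCsub hac
    simp only [Finset.mem_compl] at h2
    exact h2 h1
  have hVcard : (B ∪ C).card = n := by
    rw [Finset.card_union_of_disjoint hdisjBC, hBcard, hCcard]
    omega
  refine ⟨⟨U, hUcard⟩, ⟨B ∪ C, hVcard⟩, ?_⟩
  have : U ∩ (B ∪ C) = B := by
    ext a
    simp only [Finset.mem_inter, Finset.mem_union]
    constructor
    · rintro ⟨haU, hB | hC⟩
      · exact hB
      · exact absurd haU (by simpa using hCsub hC)
    · intro hB
      exact ⟨hBsub hB, Or.inl hB⟩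
  simp only [this, hBcard]

lemma kneser_card_inter_le (u v : KV n k) : (u.1 ∩ v.1).card ≤ n := by
  have h1 : (u.1 ∩ v.1).card ≤ u.1.card := Finset.card_le_card Finset.inter_subset_left
  rw [u.2] at h1; exact h1

/-- upper bound: dist ≤ Dnat -/
lemma kneser_dist_le (hn : 0 < n) (hk : 0 < k) (u v : KV n k) :
    (KneserGraph (2 * n + k) n).dist u v ≤ Dnat n k ((u.1 ∩ v.1).card) := by
  set s := (u.1 ∩ v.1).card with hs
  have hsn : s ≤ n := kneser_card_inter_le u v
  rw [Dnat, le_min_iff]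
  constructor
  · obtain ⟨p, hp⟩ := kneser_walk_even hn hk (cdiv (n - s) k) u v
      (by have := cdiv_mul_ge hk (n - s); omega)
    exact le_trans (SimpleGraph.dist_le p) hp
  · obtain ⟨p, hp⟩ := kneser_walk_odd hn hk (cdiv s k) u v
      (by have := cdiv_mul_ge hk s; omega)
    exact le_trans (SimpleGraph.dist_le p) hp

/-- lower bound: Dnat ≤ dist -/
lemma kneser_le_dist (hn : 0 < n) (hk : 0 < k) (u v : KV n k) :
    Dnat n k ((u.1 ∩ v.1).card) ≤ (KneserGraph (2 * n + k) n).dist u v := by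
  set s := (u.1 ∩ v.1).card with hs
  have hsn : s ≤ n := kneser_card_inter_le u v
  have hreach : (KneserGraph (2 * n + k) n).Reachable u v := by
    obtain ⟨p, _⟩ := kneser_walk_odd hn hk n u v (by nlinarith)
    exact ⟨p⟩
  obtain ⟨p, hp⟩ := hreach.exists_walk_length_eq_dist
  obtain ⟨hevn, hodd⟩ := kneser_walk_inv u v p
  rw [← hp]
  set d := p.length with hd
  rcases Nat.even_or_odd d with he | ho
  · have h1 := hevn he
    have h2 : n ≤ s + (d / 2) * k := by exact_mod_cast h1
    have h3 : cdiv (n - s) k ≤ d / 2 := cdiv_le_of hk (by omega)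
    have h4 : 2 * (d / 2) = d := by obtain ⟨m, hm⟩ := he; omega
    calc Dnat n k s ≤ 2 * cdiv (n - s) k := min_le_left _ _
    _ ≤ 2 * (d / 2) := by omega
    _ = d := h4
  · have h1 := hodd ho
    have h2 : s ≤ (d / 2) * k := by exact_mod_cast h1
    have h3 : cdiv s k ≤ d / 2 := cdiv_le_of hk h2
    have h4 : 2 * (d / 2) + 1 = d := by obtain ⟨m, hm⟩ := ho; omega
    calc Dnat n k s ≤ 2 * cdiv s k + 1 := min_le_right _ _
    _ ≤ 2 * (d / 2) + 1 := by omega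
    _ = d := h4

lemma kneser_ediam_ne_top (hn : 0 < n) (hk : 0 < k) :
    (KneserGraph (2 * n + k) n).ediam ≠ ⊤ := by
  have hle : (KneserGraph (2 * n + k) n).ediam ≤ (2 * n + 1 : ℕ) := by
    apply SimpleGraph.ediam_le_of_edist_le
    intro a b
    obtain ⟨p, hp⟩ := kneser_walk_odd hn hk n a b
      (by have := kneser_card_inter_le a b; nlinarith)
    calc (KneserGraph (2 * n + k) n).edist a b ≤ p.length := SimpleGraph.Walk.edist_le p
    _ ≤ ((2 * n + 1 : ℕ) : ℕ∞) := by exact_mod_cast Nat.cast_le.mpr hp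
  exact ne_top_of_le_ne_top (ENat.coe_ne_top _) hle

theorem intersection_bounds_of_dist_eq_diam
    (n k : ℕ) (hn : 0 < n) (hk : 0 < k)
    (u v : {s : Finset (Fin (2 * n + k)) // s.card = n}) (huv : u ≠ v)
    (s : ℕ) (hs : s = (u.1 ∩ v.1).card)
    (h : (KneserGraph (2 * n + k) n).dist u v = (KneserGraph (2 * n + k) n).diam) :
    pInt n k ≤ (s : ℤ) ∧ (s : ℤ) ≤ pInt n k + (Hfun n k : ℤ) := by
  have hsn : s ≤ n - 1 := by
    have h1 : s ≤ n := hs ▸ kneser_card_inter_le u v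
    rcases Nat.lt_or_ge s n with hlt | hge
    · omega
    · exact absurd (kneser_eq_of_inter u v (by omega)) huv
  -- extremal pair
  obtain ⟨t, ht, htD⟩ := arith_A1 n k hn hk
  obtain ⟨u', v', huv'⟩ := kneser_exists_pair hn hk t ht
  have hchain : cdiv (n - 1) k + 1 ≤ Dnat n k s := by
    calc cdiv (n - 1) k + 1 ≤ Dnat n k t := htD
    _ = Dnat n k ((u'.1 ∩ v'.1).card) := by rw [huv']
    _ ≤ (KneserGraph (2 * n + k) n).dist u' v' := kneser_le_dist hn hk u' v'
    _ ≤ (KneserGraph (2 * n + k) n).diam :=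
        SimpleGraph.dist_le_diam (kneser_ediam_ne_top hn hk)
    _ = (KneserGraph (2 * n + k) n).dist u v := h.symm
    _ ≤ Dnat n k s := by rw [hs]; exact kneser_dist_le hn hk u v
  exact arith_A2 n k s hn hk hsn hchain

end KneserAux
end

section
/- Let n and k be positive integers, and let u and v be distinct vertices of the Kneser graph K(2n+k,n). If |u ∩ v| > (⌈(n-1)/(2k)⌉ - 1)·k + 1 + H(n,k), then dist(u,v) is even. -/
open Finset SimpleGraph

section KneserAux

variable {n k : ℕ}

/-- the two basic counting inequalities along an edge -/
lemma kneser_inter_bounds (u a b : Finset (Fin (2 * n + k)))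
    (hu : u.card = n) (ha : a.card = n) (hb : b.card = n) (hab : Disjoint a b) :
    (u ∩ a).card + (u ∩ b).card ≤ n ∧ n ≤ (u ∩ a).card + (u ∩ b).card + k := by
  constructor
  · have hd : Disjoint (u ∩ a) (u ∩ b) :=
      hab.mono inter_subset_right inter_subset_right
    have hsub : (u ∩ a) ∪ (u ∩ b) ⊆ u := union_subset inter_subset_left inter_subset_left
    have h1 := card_le_card hsub
    rw [card_union_of_disjoint hd] at h1
    omega
  · have h1 := card_inter_add_card_sdiff u a
    have h2 := card_inter_add_card_sdiff (u \ a) b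
    have h3 : ((u \ a) ∩ b).card ≤ (u ∩ b).card :=
      card_le_card (inter_subset_inter_right sdiff_subset)
    have h4 : (u \ a) \ b ⊆ univ \ (a ∪ b) := by
      intro x hx
      simp only [mem_sdiff, mem_union, mem_univ, true_and] at hx ⊢
      tauto
    have h5 := card_le_card h4
    have h6 : (univ \ (a ∪ b)).card = k := by
      rw [card_sdiff_of_subset (subset_univ _), card_union_of_disjoint hab, card_univ, Fintype.card_fin]
      omega
    omega

lemma kneser_exists_walk_two (hn : 0 < n)
    (u v : {s : Finset (Fin (2 * n + k)) // s.card = n})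
    (hle : n ≤ (u.1 ∩ v.1).card + k) :
    ∃ p : (KneserGraph (2 * n + k) n).Walk u v, p.length ≤ 2 := by
  have hcard : n ≤ (univ \ (u.1 ∪ v.1)).card := by
    have h1 := card_union_add_card_inter u.1 v.1
    have h2 : (univ \ (u.1 ∪ v.1)).card = 2 * n + k - (u.1 ∪ v.1).card := by
      rw [card_sdiff_of_subset (subset_univ _), card_univ, Fintype.card_fin]
    have h3 := u.2; have h4 := v.2
    omega
  obtain ⟨w', hw'sub, hw'card⟩ := exists_subset_card_eq hcard
  obtain ⟨-, hdisj⟩ := subset_sdiff.mp hw'sub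
  have hdu : Disjoint w' u.1 := hdisj.mono_right subset_union_left
  have hdv : Disjoint w' v.1 := hdisj.mono_right subset_union_right
  set w : {s : Finset (Fin (2 * n + k)) // s.card = n} := ⟨w', hw'card⟩ with hw
  have hne1 : u ≠ w := by
    intro hEq
    rw [hEq] at hdu
    rw [disjoint_self] at hdu
    rw [hdu] at hw'card
    simp at hw'card
    omega
  have hne2 : w ≠ v := by
    intro hEq
    rw [← hEq] at hdv
    rw [disjoint_self] at hdv
    rw [hdv] at hw'card
    simp at hw'card
    omega
  have adj1 : (KneserGraph (2 * n + k) n).Adj u w := ⟨hdu.symm, hne1⟩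
  have adj2 : (KneserGraph (2 * n + k) n).Adj w v := ⟨hdv, hne2⟩
  exact ⟨.cons adj1 (.cons adj2 .nil), by simp⟩

lemma kneser_exists_walk_upper (hn : 0 < n) (hk : 0 < k) (c : ℕ) :
    ∀ u v : {s : Finset (Fin (2 * n + k)) // s.card = n},
      n ≤ (u.1 ∩ v.1).card + c * k →
      ∃ p : (KneserGraph (2 * n + k) n).Walk u v, p.length ≤ 2 * c := by
  induction c with
  | zero =>
    intro u v hle
    simp only [Nat.zero_mul, Nat.add_zero] at hle
    have h1 : u.1 ∩ v.1 = u.1 := by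
      apply eq_of_subset_of_card_le inter_subset_left
      rw [u.2]; exact hle
    have h2 : u.1 ⊆ v.1 := by rw [← h1]; exact inter_subset_right
    have h3 : u.1 = v.1 := eq_of_subset_of_card_le h2 (by rw [u.2, v.2])
    have h4 : u = v := Subtype.ext h3
    subst h4
    exact ⟨.nil, by simp⟩
  | succ c ih =>
    intro u v hle
    by_cases hcase : n ≤ (u.1 ∩ v.1).card + k
    · obtain ⟨p, hp⟩ := kneser_exists_walk_two hn u v hcase
      exact ⟨p, by omega⟩
    push_neg at hcase
    have hsd1 : (u.1 \ v.1).card + (u.1 ∩ v.1).card = n := by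
      rw [card_sdiff_add_card_inter, u.2]
    have hsd2 : (v.1 \ u.1).card + (u.1 ∩ v.1).card = n := by
      rw [inter_comm, card_sdiff_add_card_inter, v.2]
    obtain ⟨B, hB, hBcard⟩ := exists_subset_card_eq (s := u.1 \ v.1) (n := k) (by omega)
    obtain ⟨T, hT, hTcard⟩ := exists_subset_card_eq (s := v.1 \ u.1) (n := k) (by omega)
    have hBu : B ⊆ u.1 := hB.trans sdiff_subset
    have hBv : Disjoint B v.1 := sdiff_disjoint.mono_left hB
    have hTu : Disjoint T u.1 := sdiff_disjoint.mono_left hT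
    have hTv : T ⊆ v.1 := hT.trans sdiff_subset
    have hkn : k ≤ n := by omega
    have hwcard : ((u.1 \ B) ∪ T).card = n := by
      rw [card_union_of_disjoint (hTu.mono_right sdiff_subset).symm, card_sdiff_of_subset hBu,
        hTcard, u.2]
      have := card_le_card hBu
      rw [u.2, hBcard] at this
      omega
    set u' : {s : Finset (Fin (2 * n + k)) // s.card = n} := ⟨(u.1 \ B) ∪ T, hwcard⟩
      with hu'
    have h1 : n ≤ (u.1 ∩ u'.1).card + k := by
      have hsub : u.1 \ B ⊆ u.1 ∩ u'.1 :=
        subset_inter sdiff_subset subset_union_left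
      have h2 := card_le_card hsub
      rw [card_sdiff_of_subset hBu, hBcard, u.2] at h2
      omega
    obtain ⟨p1, hp1⟩ := kneser_exists_walk_two hn u u' h1
    have h2 : (u.1 ∩ v.1).card + k ≤ (u'.1 ∩ v.1).card := by
      have hsub : (u.1 ∩ v.1) ∪ T ⊆ u'.1 ∩ v.1 := by
        apply union_subset
        · apply subset_inter _ inter_subset_right
          refine (subset_sdiff.mpr ⟨inter_subset_left, ?_⟩).trans subset_union_left
          exact (hBv.mono_right inter_subset_right).symm
        · exact subset_inter subset_union_right hTv
      have hd : Disjoint (u.1 ∩ v.1) T := (hTu.mono_right inter_subset_left).symm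
      have h3 := card_le_card hsub
      rw [card_union_of_disjoint hd, hTcard] at h3
      exact h3
    obtain ⟨p2, hp2⟩ := ih u' v (by
      have hsm : (c + 1) * k = c * k + k := by ring
      omega)
    exact ⟨p1.append p2, by rw [SimpleGraph.Walk.length_append]; omega⟩

lemma kneser_walk_lower (u v : {s : Finset (Fin (2 * n + k)) // s.card = n})
    (p : (KneserGraph (2 * n + k) n).Walk u v) (t : ℕ) :
    (2 * t ≤ p.length → n ≤ (u.1 ∩ (p.getVert (2 * t)).1).card + t * k) ∧
    (2 * t + 1 ≤ p.length → (u.1 ∩ (p.getVert (2 * t + 1)).1).card ≤ t * k) := by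
  induction t with
  | zero =>
    constructor
    · intro _
      simp only [Nat.mul_zero, SimpleGraph.Walk.getVert_zero, Nat.zero_mul]
      rw [inter_self, u.2]
      omega
    · intro hlen
      simp only [Nat.mul_zero, Nat.zero_add, Nat.zero_mul]
      have hadj := p.adj_getVert_succ (show 0 < p.length by omega)
      rw [SimpleGraph.Walk.getVert_zero] at hadj
      obtain ⟨hb1, -⟩ := kneser_inter_bounds u.1 u.1 (p.getVert 1).1 u.2 u.2
        (p.getVert 1).2 (hadj : Disjoint _ _ ∧ _).1
      rw [inter_self, u.2] at hb1
      omega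
  | succ t ih =>
    have key : 2 * t + 2 ≤ p.length →
        n ≤ (u.1 ∩ (p.getVert (2 * t + 2)).1).card + (t + 1) * k := by
      intro hlen
      have h1 := ih.2 (by omega)
      have hadj := p.adj_getVert_succ (show 2 * t + 1 < p.length by omega)
      obtain ⟨-, hb2⟩ := kneser_inter_bounds u.1 (p.getVert (2 * t + 1)).1
        (p.getVert (2 * t + 2)).1 u.2 (p.getVert (2 * t + 1)).2
        (p.getVert (2 * t + 2)).2 (hadj : Disjoint _ _ ∧ _).1
      have hsm : (t + 1) * k = t * k + k := by ring
      omega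
    constructor
    · intro hlen
      have h := key (by omega)
      have he : 2 * (t + 1) = 2 * t + 2 := by ring
      rw [he]
      exact h
    · intro hlen
      have h1 := key (by omega)
      have hadj := p.adj_getVert_succ (show 2 * t + 2 < p.length by omega)
      obtain ⟨hb1, -⟩ := kneser_inter_bounds u.1 (p.getVert (2 * t + 2)).1
        (p.getVert (2 * t + 3)).1 u.2 (p.getVert (2 * t + 2)).2
        (p.getVert (2 * t + 3)).2 (hadj : Disjoint _ _ ∧ _).1
      have he : 2 * (t + 1) + 1 = 2 * t + 3 := by ring
      rw [he]
      omega

lemma kneser_arith_contra (K N S C T q M R HZ : ℤ)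
    (hK : 0 < K)
    (zF1 : S ≤ T * K) (zF2 : T + 1 ≤ C)
    (zF4 : C * K ≤ N - S + K - 1)
    (zF5 : N = K * M + R) (zR0 : 0 ≤ R) (zRK : R < K)
    (zF7 : N - 1 ≤ 2 * K * q)
    (zH : (q - 1) * K + 1 + HZ < S)
    (hHZ : (2 ≤ R ∧ HZ = R - 2) ∨ (R ≤ 1 ∧ 2 ≤ R + K ∧ HZ = R + K - 2) ∨
      (R = 0 ∧ K = 1 ∧ HZ = 0)) : False := by
  rcases hHZ with ⟨hR2, hHZ⟩ | ⟨hR1, hRK2, hHZ⟩ | ⟨hR0, hK1, hHZ⟩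
  · -- case 2 ≤ R
    subst hHZ
    have hS : (q - 1) * K + R ≤ S := by linarith
    have h2q : M + 1 ≤ 2 * q := by
      have h1 : K * M < K * (2 * q) := by nlinarith
      have h2 := lt_of_mul_lt_mul_left h1 hK.le
      linarith
    have hC : C < M - q + 2 := by
      have h1 : C * K < (M - q + 2) * K := by nlinarith
      exact lt_of_mul_lt_mul_right h1 hK.le
    have hT : T ≤ q - 1 := by linarith
    have hTK : T * K ≤ (q - 1) * K := mul_le_mul_of_nonneg_right hT hK.le
    nlinarith
  · -- case R ≤ 1, K + R ≥ 2
    subst hHZ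
    have hS : q * K + R ≤ S := by nlinarith
    have hR01 : R = 0 ∨ R = 1 := by omega
    have h2q : M ≤ 2 * q := by
      rcases le_or_gt M (2 * q) with h | h
      · exact h
      · exfalso
        have h1 : K * (2 * q + 1) ≤ K * M := by
          apply mul_le_mul_of_nonneg_left (by linarith) hK.le
        rcases hR01 with h0 | h1' <;> nlinarith
    have hC : C < M - q + 1 := by
      have h1 : C * K < (M - q + 1) * K := by nlinarith
      exact lt_of_mul_lt_mul_right h1 hK.le
    have hT : T ≤ q - 1 := by linarith
    have hTK : T * K ≤ (q - 1) * K := mul_le_mul_of_nonneg_right hT hK.le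
    nlinarith
  · -- case R = 0, K = 1
    subst hK1 hR0 hHZ
    nlinarith

lemma kneser_exists_ceil (k : ℕ) (hk : 0 < k) (d : ℕ) :
    ∃ c : ℕ, d ≤ c * k ∧ c * k ≤ d + k - 1 := by
  induction d with
  | zero => exact ⟨0, by simp, by simp⟩
  | succ d ih =>
    obtain ⟨c, h1, h2⟩ := ih
    by_cases h : d + 1 ≤ c * k
    · exact ⟨c, h, by omega⟩
    · refine ⟨c + 1, ?_, ?_⟩ <;>
      · have hck : (c + 1) * k = c * k + k := by ring
        omega

end KneserAux

theorem even_dist_of_large_intersection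
    (n k : ℕ) (hn : 0 < n) (hk : 0 < k)
    (u v : {s : Finset (Fin (2 * n + k)) // s.card = n}) (huv : u ≠ v)
    (h : pInt n k + (Hfun n k : ℤ) < ((u.1 ∩ v.1).card : ℤ)) :
    Even ((KneserGraph (2 * n + k) n).dist u v) := by
  classical
  set s := (u.1 ∩ v.1).card with hs
  have hsn : s < n := by
    rcases lt_or_ge s n with h1 | h1
    · exact h1
    · exfalso
      have hsub : u.1 ∩ v.1 = u.1 :=
        eq_of_subset_of_card_le inter_subset_left (by rw [u.2]; exact h1)
      have h2 : u.1 ⊆ v.1 := by rw [← hsub]; exact inter_subset_right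
      exact huv (Subtype.ext (eq_of_subset_of_card_le h2 (by rw [u.2, v.2])))
  obtain ⟨c, hc1, hc2⟩ := kneser_exists_ceil k hk (n - s)
  obtain ⟨p, hp⟩ := kneser_exists_walk_upper hn hk c u v (by omega)
  have hdist : (KneserGraph (2 * n + k) n).dist u v ≤ 2 * c :=
    le_trans (SimpleGraph.dist_le p) hp
  by_contra hodd
  rw [Nat.not_even_iff_odd] at hodd
  obtain ⟨t, ht⟩ := hodd
  have hreach : (KneserGraph (2 * n + k) n).Reachable u v := ⟨p⟩
  obtain ⟨p0, hp0⟩ := hreach.exists_walk_length_eq_dist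
  have hlen : 2 * t + 1 ≤ p0.length := by omega
  have hv : p0.getVert (2 * t + 1) = v := by
    rw [show 2 * t + 1 = p0.length by omega, SimpleGraph.Walk.getVert_length]
  have hst := (kneser_walk_lower u v p0 t).2 hlen
  rw [hv, ← hs] at hst
  have htc : t < c := by omega
  -- move to ℤ
  rw [pInt] at h
  set q : ℤ := ⌈((n : ℚ) - 1) / (2 * k)⌉ with hq
  have hK : (0 : ℤ) < (k : ℤ) := by exact_mod_cast hk
  have zF7 : (n : ℤ) - 1 ≤ 2 * k * q := by
    have h1 : ((n : ℚ) - 1) / (2 * k) ≤ (q : ℚ) := Int.le_ceil _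
    rw [div_le_iff₀ (by positivity)] at h1
    have h2 : ((n : ℤ) : ℚ) - 1 ≤ ((2 * k * q : ℤ) : ℚ) := by push_cast; linarith
    exact_mod_cast h2
  have zF1 : (s : ℤ) ≤ (t : ℤ) * k := by exact_mod_cast hst
  have zF2 : (t : ℤ) + 1 ≤ (c : ℤ) := by exact_mod_cast htc
  have zF4 : (c : ℤ) * k ≤ (n : ℤ) - s + k - 1 := by
    have := hc2
    omega
  have zF5 : (n : ℤ) = (k : ℤ) * (n / k : ℕ) + (n % k : ℕ) := by
    have := Nat.div_add_mod n k
    omega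
  have zR0 : (0 : ℤ) ≤ (n % k : ℕ) := by positivity
  have zRK : ((n % k : ℕ) : ℤ) < (k : ℤ) := by
    have := Nat.mod_lt n hk
    omega
  have hHZ : (2 ≤ ((n % k : ℕ) : ℤ) ∧ (Hfun n k : ℤ) = ((n % k : ℕ) : ℤ) - 2) ∨
      (((n % k : ℕ) : ℤ) ≤ 1 ∧ 2 ≤ ((n % k : ℕ) : ℤ) + (k : ℤ) ∧
        (Hfun n k : ℤ) = ((n % k : ℕ) : ℤ) + (k : ℤ) - 2) ∨
      (((n % k : ℕ) : ℤ) = 0 ∧ (k : ℤ) = 1 ∧ (Hfun n k : ℤ) = 0) := by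
    unfold Hfun
    by_cases h1 : n % k ≤ 1
    · rw [if_pos h1]
      by_cases h2 : 2 ≤ n % k + k
      · right; left
        refine ⟨by omega, by omega, by omega⟩
      · right; right
        refine ⟨by omega, by omega, by omega⟩
    · left
      rw [if_neg h1]
      refine ⟨by omega, by omega⟩
  exact kneser_arith_contra (k : ℤ) (n : ℤ) (s : ℤ) (c : ℤ) (t : ℤ) q
    ((n / k : ℕ) : ℤ) ((n % k : ℕ) : ℤ) (Hfun n k : ℤ) hK zF1 zF2 zF4 zF5 zR0 zRK zF7
    (by linarith) hHZ
end

section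
/- Let n and k be positive integers, let r be a vertex of the Kneser graph K(2n+k,n), and let D be the set of all vertices v of K(2n+k,n) with dist(r,v) = diam(K(2n+k,n)). Then D ∪ {r} is a geodetic set of K(2n+k,n), i.e., every vertex of K(2n+k,n) lies on a shortest path between two vertices of D ∪ {r}. -/
namespace KGeo


/-- ceiling division -/
def cdiv (k x : ℕ) : ℕ := (x + k - 1) / k

lemma cdiv_le_iff {k : ℕ} (hk : 0 < k) {x t : ℕ} : cdiv k x ≤ t ↔ x ≤ t * k := by
  unfold cdiv
  rw [Nat.div_le_iff_le_mul_add_pred hk]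
  rw [Nat.mul_comm]
  omega

lemma lt_cdiv_iff {k : ℕ} (hk : 0 < k) {x t : ℕ} : t < cdiv k x ↔ t * k < x := by
  rw [← Nat.not_le, ← Nat.not_le, cdiv_le_iff hk]

lemma le_cdiv_mul {k : ℕ} (hk : 0 < k) (x : ℕ) : x ≤ cdiv k x * k :=
  (cdiv_le_iff hk).mp le_rfl

lemma cdiv_mul_lt {k : ℕ} (hk : 0 < k) (x : ℕ) : cdiv k x * k < x + k := by
  rcases Nat.eq_zero_or_pos (cdiv k x) with h | h
  · simp [h]; omega
  · have : ¬ (cdiv k x ≤ cdiv k x - 1) := by omega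
    rw [cdiv_le_iff hk] at this
    have := Nat.not_le.mp this
    calc cdiv k x * k = (cdiv k x - 1) * k + k := by
          rw [Nat.sub_mul]; have := Nat.le_mul_of_pos_left k h; omega
      _ < x + k := by omega

lemma cdiv_eq_zero_iff {k : ℕ} (hk : 0 < k) {x : ℕ} : cdiv k x = 0 ↔ x = 0 := by
  rw [← Nat.le_zero, cdiv_le_iff hk]; omega

section Arith
variable (n k : ℕ)

/-- distance as function of intersection size -/
def F (s : ℕ) : ℕ := min (2 * cdiv k (n - s)) (2 * cdiv k s + 1)

/-- diameter -/
def T : ℕ := cdiv k (n - 1) + 1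

lemma F_le_T (hn : 0 < n) (hk : 0 < k) (s : ℕ) (hs : s ≤ n) : F n k s ≤ T n k := by
  by_contra hcon
  rw [Nat.not_le] at hcon
  set a := cdiv k (n - s) with ha
  set b := cdiv k s with hb
  have h1 : T n k < min (2 * a) (2 * b + 1) := hcon
  have hT1 : 1 ≤ T n k := by unfold T; omega
  have hb1 : 1 ≤ b := by omega
  have ha1 : 1 ≤ a := by omega
  -- characterizations
  have c1 : (a - 1) * k < n - s := (lt_cdiv_iff hk).mp (by omega)
  have c2 : (b - 1) * k < s := (lt_cdiv_iff hk).mp (by omega)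
  -- T ≥ a + b : cdiv k (n-1) ≥ a + b - 1, i.e. (a+b-2)*k < n-1
  have c3 : a + b - 2 < cdiv k (n - 1) := by
    rw [lt_cdiv_iff hk]
    have e1 : (a + b - 2) * k = (a-1) * k + (b-1)*k := by
      rw [← Nat.add_mul]; congr 1; omega
    omega
  have hTab : a + b ≤ T n k := by unfold T; omega
  omega


lemma ext_arith (hn : 0 < n) (hk : 0 < k) (s : ℕ) (hs : s ≤ n)
    (hlt : F n k s < T n k) :
    ∃ t, t + s ≤ n ∧ n ≤ t + k + s ∧ t ≤ n ∧ F n k t = F n k s + 1 := by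
  by_cases hsn : s = n
  · -- s = n
    subst hsn
    refine ⟨0, by omega, by omega, by omega, ?_⟩
    have h0 : F s k s = 0 := by
      unfold F; simp [cdiv_eq_zero_iff hk]
    have h1 : F s k 0 = 1 := by
      unfold F
      have h2 : 1 ≤ cdiv k s := by
        have : (0:ℕ) < cdiv k s := (lt_cdiv_iff hk).mpr (by omega)
        omega
      have h3 : cdiv k 0 = 0 := by rw [cdiv_eq_zero_iff hk]
      simp [h3]
      omega
    omega
  · have hsn' : s < n := by omega
    set a := cdiv k (n - s) with ha
    set b := cdiv k s with hb
    have ha1 : 1 ≤ a := by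
      have : (0:ℕ) < a := by rw [ha, lt_cdiv_iff hk]; omega
      omega
    -- characterizations
    have ca1 : (a - 1) * k < n - s := by
      rw [ha, ← lt_cdiv_iff hk]; omega
    have ca2 : n - s ≤ a * k := by rw [ha, ← cdiv_le_iff hk]
    have cb2 : s ≤ b * k := by rw [hb, ← cdiv_le_iff hk]
    have ea : (a - 1) * k + k = a * k := by
      rw [Nat.sub_mul]; have : k ≤ a * k := Nat.le_mul_of_pos_left k ha1; omega
    by_cases hab : a ≤ b
    · -- even branch: F s = 2a
      have hb1 : 1 ≤ b := le_trans ha1 hab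
      have cb1 : (b - 1) * k < s := by
        rw [hb, ← lt_cdiv_iff hk]; omega
      have hab' : (a-1) * k ≤ (b-1) * k := Nat.mul_le_mul_right k (by omega)
      have hFs : F n k s = 2 * a := by
        unfold F; rw [← ha, ← hb]; omega
      -- from hlt : 2a < T, get n ≥ (2a-1)k + 2
      have hn2 : (2 * a - 1) * k + 2 ≤ n := by
        have h4 : 2 * a - 1 < cdiv k (n - 1) := by
          have : 2 * a < T n k := by omega
          unfold T at this; omega
        rw [lt_cdiv_iff hk] at h4
        have e2 : (2 * a - 1) * k + k = 2 * (a * k) := by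
          rw [Nat.sub_mul, Nat.mul_assoc]
          have : k ≤ 2 * a * k := Nat.le_mul_of_pos_left k (by omega)
          rw [Nat.mul_assoc] at this
          omega
        omega
      have e2 : (2 * a - 1) * k + k = 2 * (a * k) := by
        rw [Nat.sub_mul, Nat.mul_assoc]
        have : k ≤ 2 * a * k := Nat.le_mul_of_pos_left k (by omega)
        rw [Nat.mul_assoc] at this
        omega
      set M := max s (a * k + 1) with hM
      have hMn : M ≤ n := by
        rw [hM]; apply max_le hs; omega
      refine ⟨n - M, by omega, ?_, by omega, ?_⟩
      · -- n ≤ (n - M) + k + s  ⟺  M ≤ k + s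
        have : M ≤ k + s := by
          rw [hM]; apply max_le (by omega); omega
        omega
      · -- F (n - M) = 2a + 1
        have ht1 : cdiv k (n - M) = a := by
          apply le_antisymm
          · rw [cdiv_le_iff hk]
            rcases le_or_gt s (a*k+1) with h | h
            · have : M = a * k + 1 := by rw [hM]; omega
              omega
            · have : M = s := by rw [hM]; omega
              omega
          · have : a - 1 < cdiv k (n - M) := by
              rw [lt_cdiv_iff hk]
              rcases le_or_gt s (a*k+1) with h | h
              · have hMe : M = a * k + 1 := by rw [hM]; omega
                omega
              · have hMe : M = s := by rw [hM]; omega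
                omega
            omega
        have ht2 : a + 1 ≤ cdiv k (n - (n - M)) := by
          have hmm : n - (n - M) = M := by omega
          rw [hmm]
          have : a < cdiv k M := by rw [lt_cdiv_iff hk]; omega
          omega
        have : F n k (n - M) = 2 * a + 1 := by
          unfold F; rw [ht1]; omega
        omega
    · -- odd branch: F s = 2b + 1, b < a
      have hba : b + 1 ≤ a := by omega
      have hFs : F n k s = 2 * b + 1 := by
        unfold F; rw [← ha, ← hb]; omega
      have eb : b * k + k = (b+1) * k := by rw [Nat.add_mul]; omega
      have hab2 : b * k ≤ (a-1) * k := Nat.mul_le_mul_right k (by omega)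
      -- n - s > (a-1)k ≥ bk so bk + 1 ≤ n - s
      have hbk : b * k + 1 ≤ n - s := by omega
      -- from hlt : 2b+1 < T get n ≥ 2bk + 2
      have hn2 : 2 * (b * k) + 2 ≤ n := by
        have h4 : 2 * b < cdiv k (n - 1) := by
          unfold T at hlt; omega
        rw [lt_cdiv_iff hk] at h4
        have : 2 * b * k = 2 * (b * k) := by rw [Nat.mul_assoc]
        omega
      refine ⟨n - (b * k + 1), by omega, ?_, by omega, ?_⟩
      · -- n ≤ t + k + s ⟺ bk + 1 ≤ k + s
        have : b * k + 1 ≤ k + s := by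
          rcases Nat.eq_zero_or_pos b with h0 | h0
          · simp [h0]; omega
          · have : (b-1) * k < s := by rw [hb, ← lt_cdiv_iff hk]; omega
            have e3 : (b-1) * k + k = b * k := by
              rw [Nat.sub_mul]; have : k ≤ b * k := Nat.le_mul_of_pos_left k h0; omega
            omega
        omega
      · -- F (n - (bk+1)) = 2b + 2
        set t := n - (b * k + 1) with htdef
        have ht0 : n - t = b * k + 1 := by omega
        have ht1 : cdiv k (n - t) = b + 1 := by
          rw [ht0]
          apply le_antisymm
          · rw [cdiv_le_iff hk]; omega
          · have : b < cdiv k (b * k + 1) := by rw [lt_cdiv_iff hk]; omega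
            omega
        have ht2 : b + 1 ≤ cdiv k t := by
          have : b < cdiv k t := by rw [lt_cdiv_iff hk]; omega
          omega
        have : F n k t = 2 * b + 2 := by
          unfold F; rw [ht1]; omega
        omega


end Arith


variable {n k : ℕ}

abbrev Vt (n k : ℕ) := {s : Finset (Fin (2*n+k)) // s.card = n}


lemma card_univ' : (Finset.univ : Finset (Fin (2*n+k))).card = 2*n+k := by
  simp

lemma compl_card (A : Finset (Fin (2*n+k))) : Aᶜ.card = 2*n+k - A.card := by
  rw [Finset.card_compl, Fintype.card_fin]

lemma exists_mid (hn : 0 < n) (A B : Finset (Fin (2*n+k))) (hAB : (A ∪ B).card ≤ n + k) :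
    ∃ C : Finset (Fin (2*n+k)), C.card = n ∧ Disjoint C A ∧ Disjoint C B := by
  have h1 : n ≤ ((A ∪ B)ᶜ).card := by
    rw [compl_card]; omega
  obtain ⟨C, hsub, hcard⟩ := Finset.exists_subset_card_eq h1
  refine ⟨C, hcard, ?_, ?_⟩ <;>
  · rw [Finset.disjoint_left]
    intro x hx hx2
    have := hsub hx
    simp [Finset.mem_compl] at this
    tauto

lemma adj_of_disjoint (hn : 0 < n) (u v : Vt n k) (h : Disjoint u.1 v.1) : (KneserGraph (2*n+k) n).Adj u v := by
  refine And.intro h ?_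
  intro he
  subst he
  have h2 : u.1 = ∅ := (Finset.disjoint_self_iff_empty _).mp h
  have := u.2
  rw [h2] at this
  simp at this
  omega

lemma two_step (hn : 0 < n) (u v : Vt n k) (hAB : (u.1 ∪ v.1).card ≤ n + k) :
    (KneserGraph (2*n+k) n).edist u v ≤ 2 := by
  obtain ⟨C, hcard, hCA, hCB⟩ := exists_mid hn u.1 v.1 hAB
  let c : Vt n k := ⟨C, hcard⟩
  calc (KneserGraph (2*n+k) n).edist u v ≤ (KneserGraph (2*n+k) n).edist u c + (KneserGraph (2*n+k) n).edist c v := SimpleGraph.edist_triangle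
    _ ≤ 1 + 1 := by
        apply add_le_add
        · exact le_of_eq (SimpleGraph.edist_eq_one_iff_adj.mpr
            ((KneserGraph (2*n+k) n).adj_symm (adj_of_disjoint hn c u hCA)))
        · exact le_of_eq (SimpleGraph.edist_eq_one_iff_adj.mpr
            (adj_of_disjoint hn c v hCB))
    _ = 2 := by norm_num

lemma helper_even (u v : Vt n k) (hs : (u.1 ∩ v.1).card < n) :
    ∃ v₁ : Vt n k, (u.1 ∩ v₁.1).card = (u.1 ∩ v.1).card + min (n - (u.1 ∩ v.1).card) k ∧
      (v.1 ∪ v₁.1).card ≤ n + k := by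
  set A := u.1 with hA
  set B := v.1 with hB
  set s := (A ∩ B).card with hscard
  set m0 := min (n - s) k with hm0
  have hcA : A.card = n := u.2
  have hcB : B.card = n := v.2
  have hAsd : (A \ B).card = n - s := by
    have := Finset.card_inter_add_card_sdiff A B
    omega
  have hBsd : (B \ A).card = n - s := by
    have := Finset.card_inter_add_card_sdiff B A
    rw [Finset.inter_comm] at this
    omega
  obtain ⟨P, hPsub, hPcard⟩ := Finset.exists_subset_card_eq (show m0 ≤ (A \ B).card by omega)
  obtain ⟨Q, hQsub, hQcard⟩ := Finset.exists_subset_card_eq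
    (show n - s - m0 ≤ (B \ A).card by omega)
  have d1 : Disjoint (A ∩ B) P := by
    rw [Finset.disjoint_left]
    intro x hx hx2
    have := hPsub hx2
    simp only [Finset.mem_sdiff, Finset.mem_inter] at *
    tauto
  have d2 : Disjoint (A ∩ B ∪ P) Q := by
    rw [Finset.disjoint_left]
    intro x hx hx2
    have h2 := hQsub hx2
    simp only [Finset.mem_union, Finset.mem_sdiff, Finset.mem_inter] at *
    rcases hx with h | h
    · tauto
    · have := hPsub h; simp only [Finset.mem_sdiff] at this; tauto
  have hcard : (A ∩ B ∪ P ∪ Q).card = n := by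
    rw [Finset.card_union_of_disjoint d2, Finset.card_union_of_disjoint d1]
    omega
  refine ⟨⟨A ∩ B ∪ P ∪ Q, hcard⟩, ?_, ?_⟩
  · have hint : A ∩ (A ∩ B ∪ P ∪ Q) = A ∩ B ∪ P := by
      ext x
      simp only [Finset.mem_inter, Finset.mem_union]
      constructor
      · rintro ⟨hxA, (h | h) | h⟩
        · tauto
        · tauto
        · have := hQsub h; simp only [Finset.mem_sdiff] at this; tauto
      · rintro (h | h)
        · tauto
        · have := hPsub h; simp only [Finset.mem_sdiff] at this; tauto
    show (A ∩ (A ∩ B ∪ P ∪ Q)).card = s + m0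
    rw [hint, Finset.card_union_of_disjoint d1]
    omega
  · have huni : B ∪ (A ∩ B ∪ P ∪ Q) = B ∪ P := by
      ext x
      simp only [Finset.mem_union, Finset.mem_inter]
      constructor
      · rintro (h | (h | h) | h)
        · tauto
        · tauto
        · tauto
        · have := hQsub h; simp only [Finset.mem_sdiff] at this; tauto
      · tauto
    show (B ∪ (A ∩ B ∪ P ∪ Q)).card ≤ n + k
    rw [huni]
    have : Disjoint B P := by
      rw [Finset.disjoint_left]
      intro x hx hx2
      have := hPsub hx2; simp only [Finset.mem_sdiff] at this; tauto
    rw [Finset.card_union_of_disjoint this]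
    omega

lemma helper_odd (u v : Vt n k) (hs : 0 < (u.1 ∩ v.1).card) (hsn : (u.1 ∩ v.1).card ≤ n) :
    ∃ v₁ : Vt n k, (u.1 ∩ v₁.1).card = (u.1 ∩ v.1).card - min (u.1 ∩ v.1).card k ∧
      (v.1 ∪ v₁.1).card ≤ n + k := by
  set A := u.1 with hA
  set B := v.1 with hB
  set s := (A ∩ B).card with hscard
  set m0 := min s k with hm0
  have hcA : A.card = n := u.2
  have hcB : B.card = n := v.2
  have hcompl : ((A ∪ B)ᶜ).card = k + s := by
    rw [compl_card, Finset.card_union]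
    omega
  obtain ⟨D, hDsub, hDcard⟩ := Finset.exists_subset_card_eq (show m0 ≤ (A ∩ B).card by omega)
  obtain ⟨R, hRsub, hRcard⟩ := Finset.exists_subset_card_eq
    (show m0 ≤ ((A ∪ B)ᶜ).card by omega)
  have dBR : Disjoint B R := by
    rw [Finset.disjoint_left]
    intro x hx hx2
    have := hRsub hx2
    simp only [Finset.mem_compl, Finset.mem_union] at this
    tauto
  have dAR : Disjoint A R := by
    rw [Finset.disjoint_left]
    intro x hx hx2
    have := hRsub hx2
    simp only [Finset.mem_compl, Finset.mem_union] at this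
    tauto
  have d1 : Disjoint (B \ D) R := Finset.disjoint_of_subset_left (Finset.sdiff_subset) dBR
  have hDB : D ⊆ B := hDsub.trans Finset.inter_subset_right
  have hcard : ((B \ D) ∪ R).card = n := by
    rw [Finset.card_union_of_disjoint d1, Finset.card_sdiff_of_subset hDB]
    omega
  refine ⟨⟨(B \ D) ∪ R, hcard⟩, ?_, ?_⟩
  · have hint : A ∩ ((B \ D) ∪ R) = (A ∩ B) \ D := by
      ext x
      simp only [Finset.mem_inter, Finset.mem_union, Finset.mem_sdiff]
      constructor
      · rintro ⟨hxA, (⟨h1, h2⟩ | h)⟩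
        · tauto
        · exfalso; exact Finset.disjoint_left.mp dAR hxA h
      · tauto
    show (A ∩ ((B \ D) ∪ R)).card = s - m0
    rw [hint, Finset.card_sdiff_of_subset hDsub]
    omega
  · show (B ∪ ((B \ D) ∪ R)).card ≤ n + k
    have huni : B ∪ ((B \ D) ∪ R) = B ∪ R := by
      ext x
      simp only [Finset.mem_union, Finset.mem_sdiff]
      tauto
    rw [huni, Finset.card_union_of_disjoint dBR]
    omega

lemma ub_even (hn : 0 < n) (hk : 0 < k) :
    ∀ (m : ℕ) (u v : Vt n k), n ≤ (u.1 ∩ v.1).card + m * k →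
      (KneserGraph (2*n+k) n).edist u v ≤ (2 * m : ℕ) := by
  intro m
  induction m with
  | zero =>
    intro u v h
    simp only [Nat.zero_mul, Nat.add_zero] at h
    have h1 : u.1 ∩ v.1 = u.1 := Finset.eq_of_subset_of_card_le Finset.inter_subset_left (by omega)
    have h2 : u.1 ∩ v.1 = v.1 := Finset.eq_of_subset_of_card_le Finset.inter_subset_right (by omega)
    have : u = v := Subtype.ext (h1 ▸ h2)
    subst this
    simp
  | succ m ih =>
    intro u v h
    by_cases hc : n ≤ (u.1 ∩ v.1).card + m * k
    · calc (KneserGraph (2*n+k) n).edist u v ≤ (2*m : ℕ) := ih u v hc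
        _ ≤ (2 * (m+1) : ℕ) := by norm_cast <;> omega
    · push_neg at hc
      have hs : (u.1 ∩ v.1).card < n := by
        have : 0 ≤ m * k := Nat.zero_le _
        omega
      obtain ⟨v₁, hv1, hv2⟩ := helper_even u v hs
      have hih : n ≤ (u.1 ∩ v₁.1).card + m * k := by
        rw [hv1]
        rcases le_or_gt (n - (u.1 ∩ v.1).card) k with h5 | h5
        · have : min (n - (u.1 ∩ v.1).card) k = n - (u.1 ∩ v.1).card := by omega
          omega
        · have : min (n - (u.1 ∩ v.1).card) k = k := by omega
          have := h
          simp only [Nat.succ_mul] at this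
          omega
      calc (KneserGraph (2*n+k) n).edist u v
          ≤ (KneserGraph (2*n+k) n).edist u v₁ + (KneserGraph (2*n+k) n).edist v₁ v :=
            SimpleGraph.edist_triangle
        _ ≤ (2*m : ℕ) + 2 := by
            apply add_le_add (ih u v₁ hih)
            rw [SimpleGraph.edist_comm]
            exact two_step hn v v₁ hv2
        _ ≤ (2 * (m+1) : ℕ) := by norm_cast <;> omega

lemma ub_odd (hn : 0 < n) (hk : 0 < k) :
    ∀ (m : ℕ) (u v : Vt n k), (u.1 ∩ v.1).card ≤ m * k →
      (KneserGraph (2*n+k) n).edist u v ≤ (2 * m + 1 : ℕ) := by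
  intro m
  induction m with
  | zero =>
    intro u v h
    simp only [Nat.zero_mul, Nat.le_zero, Finset.card_eq_zero] at h
    have hadj : (KneserGraph (2*n+k) n).Adj u v :=
      adj_of_disjoint hn u v (Finset.disjoint_iff_inter_eq_empty.mpr h)
    calc (KneserGraph (2*n+k) n).edist u v = 1 := SimpleGraph.edist_eq_one_iff_adj.mpr hadj
      _ ≤ (2 * 0 + 1 : ℕ) := by norm_num
  | succ m ih =>
    intro u v h
    by_cases hc : (u.1 ∩ v.1).card ≤ m * k
    · calc (KneserGraph (2*n+k) n).edist u v ≤ (2*m+1 : ℕ) := ih u v hc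
        _ ≤ (2 * (m+1) + 1 : ℕ) := by norm_cast <;> omega
    · push_neg at hc
      have hs : 0 < (u.1 ∩ v.1).card := by
        have : 0 ≤ m * k := Nat.zero_le _
        omega
      have hsn : (u.1 ∩ v.1).card ≤ n := by
        have := Finset.card_le_card (Finset.inter_subset_left : u.1 ∩ v.1 ⊆ u.1)
        rw [u.2] at this
        exact this
      obtain ⟨v₁, hv1, hv2⟩ := helper_odd u v hs hsn
      have hih : (u.1 ∩ v₁.1).card ≤ m * k := by
        rw [hv1]
        rcases le_or_gt (u.1 ∩ v.1).card k with h5 | h5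
        · have : min (u.1 ∩ v.1).card k = (u.1 ∩ v.1).card := by omega
          omega
        · have : min (u.1 ∩ v.1).card k = k := by omega
          have := h
          simp only [Nat.succ_mul] at this
          omega
      calc (KneserGraph (2*n+k) n).edist u v
          ≤ (KneserGraph (2*n+k) n).edist u v₁ + (KneserGraph (2*n+k) n).edist v₁ v :=
            SimpleGraph.edist_triangle
        _ ≤ (2*m+1 : ℕ) + 2 := by
            apply add_le_add (ih u v₁ hih)
            rw [SimpleGraph.edist_comm]
            exact two_step hn v v₁ hv2
        _ ≤ (2 * (m+1) + 1 : ℕ) := by norm_cast <;> omega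

lemma walk_parity (u v : Vt n k) (p : (KneserGraph (2*n+k) n).Walk u v) :
    (Even p.length → n ≤ (u.1 ∩ v.1).card + (p.length / 2) * k) ∧
    (¬ Even p.length → (u.1 ∩ v.1).card ≤ (p.length / 2) * k) := by
  induction p with
  | nil =>
    constructor
    · intro h'
      rename_i x
      simp only [SimpleGraph.Walk.length_nil, Nat.zero_div, Nat.zero_mul, Nat.add_zero,
        Finset.inter_self]
      exact le_of_eq x.2.symm
    · intro h
      simp only [SimpleGraph.Walk.length_nil] at h
      exact absurd (by norm_num) h
  | @cons a b c hadj q ih =>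
    have hD : Disjoint a.1 b.1 := And.left hadj
    set ℓ := q.length with hℓ
    have hlen : (SimpleGraph.Walk.cons hadj q).length = ℓ + 1 := by
      simp [SimpleGraph.Walk.length_cons, hℓ]
    rw [hlen]
    rcases Nat.even_or_odd ℓ with he | ho
    · -- ℓ even, new length odd
      obtain ⟨t, ht⟩ := he
      have ht2 : ℓ / 2 = t := by omega
      have ihe := ih.1 (by exact ⟨t, ht⟩)
      rw [ht2] at ihe
      constructor
      · intro hcon
        exfalso
        rcases hcon with ⟨cc, hc⟩
        omega
      · intro _
        have h12 : ((a.1 ∩ c.1) ∩ (b.1 ∩ c.1)) = ∅ := by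
          ext x
          simp only [Finset.mem_inter, Finset.notMem_empty, iff_false]
          rintro ⟨⟨h1, _⟩, ⟨h2, _⟩⟩
          exact Finset.disjoint_left.mp hD h1 h2
        have hsum : (a.1 ∩ c.1).card + (b.1 ∩ c.1).card ≤ n := by
          have e1 := Finset.card_union_add_card_inter (a.1 ∩ c.1) (b.1 ∩ c.1)
          have e2 : (a.1 ∩ c.1 ∪ b.1 ∩ c.1).card ≤ n := by
            calc (a.1 ∩ c.1 ∪ b.1 ∩ c.1).card ≤ c.1.card := by
                  apply Finset.card_le_card
                  intro x hx
                  simp only [Finset.mem_union, Finset.mem_inter] at hx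
                  tauto
              _ = n := c.2
          rw [h12] at e1
          simp at e1
          omega
        have e7 : (ℓ + 1) / 2 = t := by omega
        rw [e7]
        omega
    · -- ℓ odd, new length even
      obtain ⟨t, ht⟩ := ho
      have ht2 : ℓ / 2 = t := by omega
      have iho := ih.2 (by rw [Nat.even_iff]; omega)
      rw [ht2] at iho
      constructor
      · intro _
        have e1 : a.1 ∩ (c.1 ∪ b.1) = a.1 ∩ c.1 := by
          ext x
          simp only [Finset.mem_inter, Finset.mem_union]
          constructor
          · rintro ⟨h1, (h2 | h2)⟩
            · exact ⟨h1, h2⟩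
            · exact absurd h2 (Finset.disjoint_left.mp hD h1)
          · tauto
        have e2 : a.1.card = (a.1 ∩ (c.1 ∪ b.1)).card + (a.1 \ (c.1 ∪ b.1)).card :=
          (Finset.card_inter_add_card_sdiff _ _).symm
        have e3 : (a.1 \ (c.1 ∪ b.1)).card ≤ ((c.1 ∪ b.1)ᶜ).card := by
          apply Finset.card_le_card
          intro x hx
          simp only [Finset.mem_sdiff] at hx
          simp only [Finset.mem_compl]
          tauto
        have e4 : ((c.1 ∪ b.1)ᶜ).card = 2*n+k - (c.1 ∪ b.1).card := compl_card _
        have e5 : (c.1 ∪ b.1).card + (c.1 ∩ b.1).card = n + n := by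
          have := Finset.card_union_add_card_inter c.1 b.1
          rw [c.2, b.2] at this
          exact this
        have e6 : (c.1 ∩ b.1).card = (b.1 ∩ c.1).card := by rw [Finset.inter_comm]
        have e7 : (ℓ + 1) / 2 = t + 1 := by omega
        rw [e7]
        have e8 : (t+1) * k = t * k + k := by rw [Nat.succ_mul]
        have e9 : a.1.card = n := a.2
        have e10 : (c.1 ∪ b.1).card ≤ 2*n+k := by
          calc (c.1 ∪ b.1).card ≤ (Finset.univ : Finset (Fin (2*n+k))).card :=
                Finset.card_le_card (Finset.subset_univ _)
            _ = 2*n+k := by simp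
        rw [e1] at e2
        omega
      · intro hcon
        exfalso
        rw [Nat.even_iff] at hcon
        omega

lemma inter_card_le (u v : Vt n k) : (u.1 ∩ v.1).card ≤ n := by
  have := Finset.card_le_card (Finset.inter_subset_left : u.1 ∩ v.1 ⊆ u.1)
  rw [u.2] at this
  exact this

lemma edist_eq (hn : 0 < n) (hk : 0 < k) (u v : Vt n k) :
    (KneserGraph (2*n+k) n).edist u v = (F n k ((u.1 ∩ v.1).card) : ℕ∞) := by
  set s := (u.1 ∩ v.1).card with hs
  have hsn : s ≤ n := inter_card_le u v
  have h1 : (KneserGraph (2*n+k) n).edist u v ≤ (2 * cdiv k (n - s) : ℕ) := by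
    apply ub_even hn hk (cdiv k (n-s)) u v
    have := le_cdiv_mul hk (n - s)
    omega
  have h2 : (KneserGraph (2*n+k) n).edist u v ≤ (2 * cdiv k s + 1 : ℕ) := by
    apply ub_odd hn hk (cdiv k s) u v
    exact le_cdiv_mul hk s
  apply le_antisymm
  · rcases le_total (2 * cdiv k (n - s)) (2 * cdiv k s + 1) with h | h
    · have : F n k s = 2 * cdiv k (n - s) := by unfold F; omega
      rw [this]; exact h1
    · have : F n k s = 2 * cdiv k s + 1 := by unfold F; omega
      rw [this]; exact h2
  · have hne : (KneserGraph (2*n+k) n).edist u v ≠ ⊤ := by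
      intro hcon
      rw [hcon, top_le_iff] at h1
      exact ENat.coe_ne_top _ h1
    have hr := SimpleGraph.reachable_of_edist_ne_top hne
    obtain ⟨p, hp⟩ := hr.exists_walk_length_eq_edist
    rw [← hp]
    have wp := walk_parity u v p
    rw [Nat.cast_le]
    rcases Nat.even_or_odd p.length with he | ho
    · have h3 := wp.1 he
      have h4 : cdiv k (n - s) ≤ p.length / 2 := by
        rw [cdiv_le_iff hk]; omega
      have h5 : F n k s ≤ 2 * cdiv k (n - s) := by unfold F; omega
      obtain ⟨t, ht⟩ := he
      omega
    · have ho' : ¬ Even p.length := Nat.not_even_iff_odd.mpr ho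
      have h3 := wp.2 ho'
      have h4 : cdiv k s ≤ p.length / 2 := by
        rw [cdiv_le_iff hk]; omega
      have h5 : F n k s ≤ 2 * cdiv k s + 1 := by unfold F; omega
      obtain ⟨t, ht⟩ := ho
      omega

lemma dist_eq (hn : 0 < n) (hk : 0 < k) (u v : Vt n k) :
    (KneserGraph (2*n+k) n).dist u v = F n k ((u.1 ∩ v.1).card) := by
  show ((KneserGraph (2*n+k) n).edist u v).toNat = _
  rw [edist_eq hn hk]
  exact ENat.toNat_coe _

lemma dist_triangle (hn : 0 < n) (hk : 0 < k) (u v w : Vt n k) :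
    (KneserGraph (2*n+k) n).dist u w ≤
      (KneserGraph (2*n+k) n).dist u v + (KneserGraph (2*n+k) n).dist v w := by
  have h := SimpleGraph.edist_triangle (G := KneserGraph (2*n+k) n) (u := u) (v := v) (w := w)
  rw [edist_eq hn hk, edist_eq hn hk, edist_eq hn hk, ← Nat.cast_add, Nat.cast_le] at h
  rw [dist_eq hn hk, dist_eq hn hk, dist_eq hn hk]
  exact h

lemma constr (r w : Vt n k) (t : ℕ) (h1 : t + (r.1 ∩ w.1).card ≤ n)
    (h2 : n ≤ t + k + (r.1 ∩ w.1).card) :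
    ∃ w' : Vt n k, Disjoint w.1 w'.1 ∧ (r.1 ∩ w'.1).card = t := by
  set s := (r.1 ∩ w.1).card with hs
  have hrw : (r.1 \ w.1).card = n - s := by
    have := Finset.card_inter_add_card_sdiff r.1 w.1
    rw [r.2] at this
    omega
  have hcompl : ((r.1 ∪ w.1)ᶜ).card = k + s := by
    rw [compl_card, Finset.card_union, r.2, w.2]
    omega
  obtain ⟨X, hXsub, hXcard⟩ := Finset.exists_subset_card_eq
    (show t ≤ (r.1 \ w.1).card by omega)
  obtain ⟨Y, hYsub, hYcard⟩ := Finset.exists_subset_card_eq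
    (show n - t ≤ ((r.1 ∪ w.1)ᶜ).card by omega)
  have dXY : Disjoint X Y := by
    rw [Finset.disjoint_left]
    intro x hx hy
    have hx2 := hXsub hx
    have hy2 := hYsub hy
    simp only [Finset.mem_sdiff, Finset.mem_compl, Finset.mem_union] at hx2 hy2
    tauto
  have hcard : (X ∪ Y).card = n := by
    rw [Finset.card_union_of_disjoint dXY]
    omega
  refine ⟨⟨X ∪ Y, hcard⟩, ?_, ?_⟩
  · rw [Finset.disjoint_left]
    intro x hx hx2
    simp only [Finset.mem_union] at hx2
    rcases hx2 with h | h
    · have := hXsub h; simp only [Finset.mem_sdiff] at this; tauto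
    · have := hYsub h; simp only [Finset.mem_compl, Finset.mem_union] at this; tauto
  · show (r.1 ∩ (X ∪ Y)).card = t
    have : r.1 ∩ (X ∪ Y) = X := by
      ext x
      simp only [Finset.mem_inter, Finset.mem_union]
      constructor
      · rintro ⟨hr, (h | h)⟩
        · exact h
        · have := hYsub h; simp only [Finset.mem_compl, Finset.mem_union] at this; tauto
      · intro h
        have := hXsub h; simp only [Finset.mem_sdiff] at this; tauto
    rw [this, hXcard]

lemma exists_far (hn : 0 < n) (hk : 0 < k) (r : Vt n k) :
    ∀ (j : ℕ) (w : Vt n k), T n k - (KneserGraph (2*n+k) n).dist r w = j →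
      ∃ v : Vt n k, (KneserGraph (2*n+k) n).dist r v = T n k ∧
        (KneserGraph (2*n+k) n).dist r w + (KneserGraph (2*n+k) n).dist w v = T n k := by
  intro j
  induction j with
  | zero =>
    intro w hw
    have hd := dist_eq hn hk r w
    have hle := F_le_T n k hn hk _ (inter_card_le r w)
    have hdT : (KneserGraph (2*n+k) n).dist r w = T n k := by omega
    exact ⟨w, hdT, by rw [SimpleGraph.dist_self]; omega⟩
  | succ j ih =>
    intro w hw
    have hd := dist_eq hn hk r w
    have hle := F_le_T n k hn hk _ (inter_card_le r w)
    have hlt : F n k ((r.1 ∩ w.1).card) < T n k := by omega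
    obtain ⟨t, h1, h2, h3, hF⟩ := ext_arith n k hn hk _ (inter_card_le r w) hlt
    obtain ⟨w', hdisj, hcard⟩ := constr r w t h1 h2
    have hadj : (KneserGraph (2*n+k) n).Adj w w' := adj_of_disjoint hn w w' hdisj
    have hdw' : (KneserGraph (2*n+k) n).dist r w' =
        (KneserGraph (2*n+k) n).dist r w + 1 := by
      rw [dist_eq hn hk, hcard, hF, hd]
    obtain ⟨v, hv1, hv2⟩ := ih w' (by omega)
    have hub : (KneserGraph (2*n+k) n).dist w v ≤ j + 1 := by
      have htri := dist_triangle hn hk w w' v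
      have hww' : (KneserGraph (2*n+k) n).dist w w' = 1 :=
        SimpleGraph.dist_eq_one_iff_adj.mpr hadj
      omega
    have hlb := dist_triangle hn hk r w v
    exact ⟨v, hv1, by omega⟩

lemma diam_eq (hn : 0 < n) (hk : 0 < k) (r : Vt n k) :
    (KneserGraph (2*n+k) n).diam = T n k := by
  have upper : (KneserGraph (2*n+k) n).ediam ≤ (T n k : ℕ∞) := by
    apply SimpleGraph.ediam_le_of_edist_le
    intro u v
    rw [edist_eq hn hk, Nat.cast_le]
    exact F_le_T n k hn hk _ (inter_card_le u v)
  obtain ⟨v, hv1, _⟩ := exists_far hn hk r (T n k - (KneserGraph (2*n+k) n).dist r r) r rfl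
  have hev : (KneserGraph (2*n+k) n).edist r v = (T n k : ℕ∞) := by
    rw [edist_eq hn hk]
    rw [dist_eq hn hk] at hv1
    rw [hv1]
  have lower : (T n k : ℕ∞) ≤ (KneserGraph (2*n+k) n).ediam := by
    rw [← hev]
    exact SimpleGraph.edist_le_ediam
  have : (KneserGraph (2*n+k) n).ediam = (T n k : ℕ∞) := le_antisymm upper lower
  rw [SimpleGraph.diam, this]
  exact ENat.toNat_coe _

end KGeo


theorem diametrically_opposed_union_root_isGeodeticSet
    (n k : ℕ) (hn : 0 < n) (hk : 0 < k)
    (r : {s : Finset (Fin (2 * n + k)) // s.card = n}) :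
    IsGeodeticSet (KneserGraph (2 * n + k) n)
      ({v | (KneserGraph (2 * n + k) n).dist r v = (KneserGraph (2 * n + k) n).diam} ∪ {r}) := by
  unfold IsGeodeticSet
  ext w
  simp only [Set.mem_univ, iff_true]
  obtain ⟨v, hv1, hv2⟩ := KGeo.exists_far hn hk r
      (KGeo.T n k - (KneserGraph (2*n+k) n).dist r w) w rfl
  have hdiam := KGeo.diam_eq hn hk r
  unfold geodIntervalSet
  rw [Set.mem_iUnion]
  refine ⟨r, ?_⟩
  rw [Set.mem_iUnion]
  refine ⟨Set.mem_union_right _ rfl, ?_⟩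
  rw [Set.mem_iUnion]
  refine ⟨v, ?_⟩
  rw [Set.mem_iUnion]
  refine ⟨Set.mem_union_left _ (by rw [Set.mem_setOf_eq, hv1, hdiam]), ?_⟩
  show (KneserGraph (2*n+k) n).dist r w + (KneserGraph (2*n+k) n).dist w v
      = (KneserGraph (2*n+k) n).dist r v
  rw [hv1]
  exact hv2
end

section
/- Let n ≥ 2 and k be positive integers with k ≥ n-1. Then the set of all n-element subsets of {1,...,2n+k} that contain the element 1 is a geodetic set of the Kneser graph K(2n+k,n) of cardinality C(2n+k-1, n-1). -/
lemma star_card (m n : ℕ) (hn : 1 ≤ n) (hnm : n ≤ m) (a : Fin m) :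
    ({v : {s : Finset (Fin m) // s.card = n} | a ∈ v.1}).ncard = (m - 1).choose (n - 1) := by
  classical
  rw [Set.ncard_eq_toFinset_card', Set.toFinset_setOf]
  have key : (Finset.univ.filter fun v : {s : Finset (Fin m) // s.card = n} => a ∈ v.1).card
      = ((Finset.univ.erase a).powersetCard (n - 1)).card := by
    refine Finset.card_bij' (fun v _ => v.1.erase a)
      (fun t ht => ⟨insert a t, ?_⟩) ?_ ?_ ?_ ?_
    · rw [Finset.mem_powersetCard] at ht
      have hat : a ∉ t := fun h => (Finset.mem_erase.1 (ht.1 h)).1 rfl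
      rw [Finset.card_insert_of_notMem hat, ht.2]
      omega
    · intro v hv
      simp only [Finset.mem_filter] at hv
      rw [Finset.mem_powersetCard]
      constructor
      · intro x hx
        exact Finset.mem_erase.2 ⟨(Finset.mem_erase.1 hx).1, Finset.mem_univ x⟩
      · rw [Finset.card_erase_of_mem hv.2, v.2]
    · intro t ht
      simp
    · intro v hv
      simp only [Finset.mem_filter] at hv
      ext x
      simp [Finset.insert_erase hv.2]
    · intro t ht
      rw [Finset.mem_powersetCard] at ht
      have hat : a ∉ t := fun h => (Finset.mem_erase.1 (ht.1 h)).1 rfl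
      simp [Finset.erase_insert hat]
  rw [key, Finset.card_powersetCard, Finset.card_erase_of_mem (Finset.mem_univ a),
    Finset.card_univ, Fintype.card_fin]

lemma star_geodetic (m n : ℕ) (hn : 2 ≤ n) (hm : 2 * n + 1 ≤ m) (a : Fin m) :
    IsGeodeticSet (KneserGraph m n) {v : {s : Finset (Fin m) // s.card = n} | a ∈ v.1} := by
  classical
  set G := KneserGraph m n with hG
  apply Set.eq_univ_of_forall
  intro w
  simp only [geodIntervalSet, Set.mem_iUnion, Set.mem_setOf_eq]
  by_cases hw : a ∈ w.1
  · exact ⟨w, hw, w, hw, by simp [geodInterval, SimpleGraph.dist_self]⟩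
  · -- construct two neighbors of w containing a
    have hC : a ∈ w.1ᶜ := Finset.mem_compl.2 hw
    have hCcard : (w.1ᶜ).card = m - n := by
      rw [Finset.card_compl, w.2, Fintype.card_fin]
    have hD : n ≤ ((w.1ᶜ).erase a).card := by
      rw [Finset.card_erase_of_mem hC, hCcard]; omega
    obtain ⟨t, htD, htc⟩ := Finset.exists_subset_card_eq hD
    obtain ⟨x, hx, y, hy, hxy⟩ := Finset.one_lt_card.1 (by omega : 1 < t.card)
    have hat : a ∉ t := fun h => (Finset.mem_erase.1 (htD h)).1 rfl
    have htC : t ⊆ w.1ᶜ := htD.trans (Finset.erase_subset _ _)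
    have hcard : ∀ z ∈ t, (insert a (t.erase z)).card = n := by
      intro z hz
      rw [Finset.card_insert_of_notMem (fun h => hat ((Finset.erase_subset _ _) h)),
        Finset.card_erase_of_mem hz, htc]
      omega
    set U : {s : Finset (Fin m) // s.card = n} := ⟨insert a (t.erase x), hcard x hx⟩ with hU
    set Vv : {s : Finset (Fin m) // s.card = n} := ⟨insert a (t.erase y), hcard y hy⟩ with hVv
    have hsubC : ∀ z : Fin m, insert a (t.erase z) ⊆ w.1ᶜ := by
      intro z b hb
      rcases Finset.mem_insert.1 hb with h | h
      · exact h ▸ hC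
      · exact htC ((Finset.erase_subset _ _) h)
    have hdisj : ∀ z : Fin m, Disjoint (insert a (t.erase z)) w.1 := by
      intro z
      exact Finset.disjoint_left.2 fun b hb => Finset.mem_compl.1 (hsubC z hb)
    have haU : a ∈ U.1 := Finset.mem_insert_self _ _
    have haV : a ∈ Vv.1 := Finset.mem_insert_self _ _
    have hUw : U ≠ w := fun h => hw (h ▸ haU)
    have hVw : Vv ≠ w := fun h => hw (h ▸ haV)
    have hUV : U ≠ Vv := by
      intro h
      have hxV : x ∈ Vv.1 := Finset.mem_insert_of_mem (Finset.mem_erase.2 ⟨hxy, hx⟩)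
      have hxU : x ∉ U.1 := by
        simp only [hU, Finset.mem_insert, Finset.mem_erase]
        push_neg
        exact ⟨fun hxa => (Finset.mem_erase.1 (htD hx)).1 hxa, fun h' => absurd rfl h'⟩
      exact hxU (h ▸ hxV)
    have hadjUw : G.Adj U w := ⟨hdisj x, hUw⟩
    have hadjwV : G.Adj w Vv := ⟨(hdisj y).symm, hVw.symm⟩
    let p : G.Walk U Vv := SimpleGraph.Walk.cons hadjUw (SimpleGraph.Walk.cons hadjwV SimpleGraph.Walk.nil)
    have hle : G.dist U Vv ≤ 2 := by
      have := SimpleGraph.dist_le p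
      have hlen : p.length = 2 := rfl
      omega
    have hne0 : G.dist U Vv ≠ 0 := by
      intro h
      rcases SimpleGraph.dist_eq_zero_iff_eq_or_not_reachable.1 h with h' | h'
      · exact hUV h'
      · exact h' ⟨p⟩
    have hne1 : G.dist U Vv ≠ 1 := by
      intro h
      exact Finset.disjoint_left.1 (SimpleGraph.dist_eq_one_iff_adj.1 h).1 haU haV
    have hdUV : G.dist U Vv = 2 := by omega
    refine ⟨U, haU, Vv, haV, ?_⟩
    have h1 : G.dist U w = 1 := SimpleGraph.dist_eq_one_iff_adj.2 hadjUw
    have h2 : G.dist w Vv = 1 := SimpleGraph.dist_eq_one_iff_adj.2 hadjwV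
    simp [geodInterval, h1, h2, hdUV]

theorem star_isGeodeticSet_of_diam_two
    (n k : ℕ) (hn : 2 ≤ n) (hk : 0 < k) (hkn : n - 1 ≤ k) :
    IsGeodeticSet (KneserGraph (2 * n + k) n)
      {v : {s : Finset (Fin (2 * n + k)) // s.card = n} | (⟨0, by omega⟩ : Fin (2 * n + k)) ∈ v.1} ∧
    ({v : {s : Finset (Fin (2 * n + k)) // s.card = n} | (⟨0, by omega⟩ : Fin (2 * n + k)) ∈ v.1} : Set {s : Finset (Fin (2 * n + k)) // s.card = n}).ncard =
      (2 * n + k - 1).choose (n - 1) := by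
  exact ⟨star_geodetic (2 * n + k) n hn (by omega) ⟨0, by omega⟩,
    star_card (2 * n + k) n (by omega) (by omega) ⟨0, by omega⟩⟩
end
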